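/- arXiv:2403.02876 — 6 statements merged into one kernel-verified Lean document; each statement's English description precedes it below -/
import Mathlib

section
/- Let A be a commutative integral domain and let a, b ∈ A be nonzero elements. If the image of b in the quotient ring A/(a) is not a zero divisor, then the quotient ring A[T]/(bT − a) of the polynomial ring A[T] by the principal ideal generated by bT − a is an integral domain. -/
open Polynomial

section Aux
variable {A : Type*} [CommRing A] [IsDomain A] (a b : A)

/-- Cancellation: if `b` is regular mod `a`, and `(bX - a) ∣ b f`, then `(bX - a) ∣ f`. -/
lemma aux_cancel (ha : a ≠ 0)
    (h : Ideal.Quotient.mk (Ideal.span {a}) b ∈ nonZeroDivisors (A ⧸ Ideal.span ({a} : Set A)))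
    (f : A[X]) (hf : (C b * X - C a) ∣ C b * f) : (C b * X - C a) ∣ f := by
  obtain ⟨q, hq⟩ := hf
  set mk := Ideal.Quotient.mk (Ideal.span ({a} : Set A)) with hmk
  have hma : mk a = 0 := Ideal.Quotient.eq_zero_iff_mem.mpr (Ideal.subset_span rfl)
  have hq' : C (mk b) * (f.map mk) = (C (mk b) * X) * (q.map mk) := by
    have := congrArg (Polynomial.map mk) hq
    simpa [Polynomial.map_mul, Polynomial.map_sub, map_C, hma] using this
  have hz : C (mk b) * (f.map mk - X * q.map mk) = 0 := by
    rw [mul_sub, hq']; ring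
  have hsub : f.map mk - X * q.map mk = 0 := by
    ext n
    have hcoeff := congrArg (fun p => Polynomial.coeff p n) hz
    simp only [coeff_C_mul, coeff_zero] at hcoeff
    exact (mem_nonZeroDivisors_iff.mp h).2 _ (by linear_combination hcoeff)
  have hker : (f - X * q) ∈ RingHom.ker (Polynomial.mapRingHom mk) := by
    simp only [RingHom.mem_ker, coe_mapRingHom, Polynomial.map_sub, Polynomial.map_mul,
      Polynomial.map_X]
    exact hsub
  rw [Polynomial.ker_mapRingHom, Ideal.mk_ker, Ideal.map_span, Set.image_singleton] at hker
  obtain ⟨h', hh'⟩ := Ideal.mem_span_singleton.mp hker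
  have e3 : C a * (q + C b * h') = 0 := by linear_combination hq - C b * hh'
  have e4 : q = -(C b * h') := by
    rcases mul_eq_zero.mp e3 with h1 | h1
    · exact absurd (by simpa using h1) ha
    · linear_combination h1
  exact ⟨-h', by linear_combination hh' + X * e4⟩

end Aux

/-- Let `A` be a commutative integral domain and `a, b ∈ A` nonzero.
If the image of `b` in `A/(a)` is not a zero divisor, then `A[T]/(bT - a)` is an
integral domain. -/
theorem stmt_0 {A : Type*} [CommRing A] [IsDomain A] (a b : A) (ha : a ≠ 0) (hb : b ≠ 0)
    (h : Ideal.Quotient.mk (Ideal.span {a}) b ∈ nonZeroDivisors (A ⧸ Ideal.span ({a} : Set A))) :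
    IsDomain (Polynomial A ⧸
      Ideal.span ({Polynomial.C b * Polynomial.X - Polynomial.C a} : Set (Polynomial A))) := by
  set K := FractionRing A
  have inj : Function.Injective (algebraMap A K) := IsFractionRing.injective A K
  have hb' : algebraMap A K b ≠ 0 := fun hz => hb (inj (by simpa using hz))
  set r : K := algebraMap A K a / algebraMap A K b with hr
  have hroot : Polynomial.aeval r (C b * X - C a) = 0 := by
    simp [hr, mul_div_cancel₀ _ hb']
  have hdeg : ∀ n (f : A[X]), f.natDegree ≤ n → Polynomial.aeval r f = 0 →
      (C b * X - C a) ∣ C b ^ n * f := by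
    intro n
    induction n with
    | zero =>
      intro f hfn hf0
      have hfc : f = C (f.coeff 0) := f.eq_C_of_natDegree_le_zero hfn
      rw [hfc] at hf0 ⊢
      rw [aeval_C] at hf0
      have : f.coeff 0 = 0 := inj (by simpa using hf0)
      simp [this]
    | succ n ih =>
      intro f hfn hf0
      by_cases hle : f.natDegree ≤ n
      · have hkey : C b ^ (n + 1) * f = C b * (C b ^ n * f) := by ring
        rw [hkey]
        exact (ih f hle hf0).mul_left _
      · have hdegf : f.natDegree = n + 1 := le_antisymm hfn (not_le.mp hle)
        set c := f.coeff (n + 1) with hc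
        set g := C b * f - C c * X ^ n * (C b * X - C a) with hg
        have hgdeg : g.natDegree ≤ n := by
          rw [natDegree_le_iff_coeff_eq_zero]
          intro N hN
          have hexp : g = C b * f - (C (c * b) * X ^ (n + 1) - C (c * a) * X ^ n) := by
            rw [hg, C_mul, C_mul]; ring
          rw [hexp]
          rcases eq_or_lt_of_le (Nat.succ_le_of_lt hN) with hE | hL
          · subst hE
            rw [coeff_sub, coeff_sub, coeff_C_mul, coeff_C_mul_X_pow, coeff_C_mul_X_pow,
              if_pos rfl, if_neg (by omega), ← hc]
            ring
          · have hfN : f.coeff N = 0 := coeff_eq_zero_of_natDegree_lt (by omega)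
            have h1 : ¬ (N = n + 1) := by omega
            have h2 : ¬ (N = n) := by omega
            rw [coeff_sub, coeff_sub, coeff_C_mul, coeff_C_mul_X_pow, coeff_C_mul_X_pow,
              if_neg h1, if_neg h2, hfN]
            ring
        have hg0 : Polynomial.aeval r g = 0 := by
          rw [hg]; simp [hroot, hf0]
        have hdvd := ih g hgdeg hg0
        have key : C b ^ (n + 1) * f
            = C b ^ n * g + (C b ^ n * (C c * X ^ n)) * (C b * X - C a) := by
          rw [hg]; ring
        rw [key]
        exact dvd_add hdvd (dvd_mul_left _ _)
  have hstrip : ∀ n (f : A[X]), (C b * X - C a) ∣ C b ^ n * f → (C b * X - C a) ∣ f := by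
    intro n
    induction n with
    | zero => intro f hf; simpa using hf
    | succ n ih =>
      intro f hf
      have hkey : C b ^ (n + 1) * f = C b ^ n * (C b * f) := by ring
      rw [hkey] at hf
      exact aux_cancel a b ha h f (ih _ hf)
  have hpne : (C b * X - C a : A[X]) ≠ 0 := by
    intro hp
    have h0 := congrArg (fun p => Polynomial.coeff p 0) hp
    simp only [coeff_sub, coeff_C_mul, coeff_X_zero, mul_zero, coeff_C, coeff_zero] at h0
    simp at h0
    exact ha h0
  have hprime : Prime (C b * X - C a : A[X]) := by
    refine ⟨hpne, ?_, ?_⟩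
    · intro hu
      have h0 := Polynomial.natDegree_eq_zero_of_isUnit hu
      have h1 : (C b * X - C a : A[X]).coeff 1 = 0 :=
        coeff_eq_zero_of_natDegree_lt (by omega)
      simp at h1
      exact hb h1
    · intro f g hfg
      have h0 : Polynomial.aeval r f * Polynomial.aeval r g = 0 := by
        obtain ⟨q, hq⟩ := hfg
        have := congrArg (Polynomial.aeval r) hq
        simpa [hroot] using this
      rcases mul_eq_zero.mp h0 with hf | hgz
      · exact Or.inl (hstrip _ f (hdeg _ f le_rfl hf))
      · exact Or.inr (hstrip _ g (hdeg _ g le_rfl hgz))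
  haveI := (Ideal.span_singleton_prime hpne).mpr hprime
  exact Ideal.Quotient.isDomain _
end

section
/- Let k be a field, let A be an affine k-domain, let B be an integral domain that is a finitely generated A-algebra with injective structure map A → B, and let S be a multiplicatively closed subset of A \ {0}. Then ML_{S⁻¹A}(S⁻¹B) = S⁻¹(ML_A(B)), i.e., the Makar-Limanov invariant of the localization S⁻¹B relative to S⁻¹A equals the localization at S of the Makar-Limanov invariant of B relative to A. -/
/-- An exponential map on a `k`-algebra `B`: a `k`-algebra homomorphism
`δ : B → B[U]` such that evaluation at `U = 0` composed with `δ` is the identity, and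
`δ_V ∘ δ_U = δ_{U+V}` (where `δ_V` is extended to `B[U]` by `δ_V(U) = U`, i.e. applied
to the coefficients, and `δ_{U+V}` is obtained from `δ` by substituting `U + V` for
the variable). -/
structure ExponentialMap (k B : Type*) [CommRing k] [CommRing B] [Algebra k B] where
  toAlgHom : B →ₐ[k] Polynomial B
  eval_zero : ∀ b : B, Polynomial.eval 0 (toAlgHom b) = b
  coassoc : ∀ b : B,
    Polynomial.map toAlgHom.toRingHom (toAlgHom b) =
      Polynomial.eval₂ (Polynomial.C.comp Polynomial.C)
        (Polynomial.X + Polynomial.C Polynomial.X) (toAlgHom b)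

/-- `b ∈ B` is invariant under the exponential map `δ`, i.e. `δ(b) = b`. -/
def ExponentialMap.Fixes {k B : Type*} [CommRing k] [CommRing B] [Algebra k B]
    (δ : ExponentialMap k B) (b : B) : Prop :=
  δ.toAlgHom b = Polynomial.C b

/-- The Makar-Limanov invariant `ML_A(B)` of `B` relative to a subset `A ⊆ B`: the
intersection of the rings of invariants `B^δ` over all exponential maps `δ` on `B`
with `A ⊆ B^δ`. -/
def mlSet (k : Type*) {B : Type*} [CommRing k] [CommRing B] [Algebra k B]
    (A : Set B) : Set B :=
  {b : B | ∀ δ : ExponentialMap k B, (∀ a ∈ A, δ.Fixes a) → δ.Fixes b}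

open Polynomial

namespace ExponentialMap

variable {k R : Type*} [CommRing k] [CommRing R] [Algebra k R]

theorem fixes_algebraMap (δ : ExponentialMap k R) (c : k) :
    δ.Fixes (algebraMap k R c) := by
  unfold Fixes
  rw [δ.toAlgHom.commutes, Polynomial.algebraMap_apply]

theorem fixes_mul (δ : ExponentialMap k R) {a b : R} (ha : δ.Fixes a) (hb : δ.Fixes b) :
    δ.Fixes (a * b) := by
  unfold Fixes at *
  rw [map_mul, ha, hb, map_mul]

theorem fixes_of_mul_eq [IsDomain R] (δ : ExponentialMap k R) {u v x : R}
    (hu : δ.Fixes u) (hv : δ.Fixes v) (hu0 : u ≠ 0) (hx : x * u = v) : δ.Fixes x := by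
  unfold Fixes at *
  have h1 : δ.toAlgHom x * C u = C x * C u := by
    calc δ.toAlgHom x * C u = δ.toAlgHom (x * u) := by rw [map_mul, hu]
    _ = C (x * u) := by rw [hx, hv]
    _ = C x * C u := by rw [map_mul]
  exact mul_right_cancel₀ (by simpa using hu0) h1

end ExponentialMap

namespace ExponentialMap

variable {k R : Type*} [CommRing k] [CommRing R] [Algebra k R]

theorem eval₂RingHom_map' {S T : Type*} [CommRing S] [CommRing T]
    (f : R →+* S) (g : S →+* T) (y : T) (p : R[X]) :
    eval₂RingHom g y (map f p) = eval₂ (g.comp f) y p := by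
  show eval₂ g y (map f p) = _
  rw [eval₂_map]

theorem mapRingHom_eval₂' {S T : Type*} [CommRing S] [CommRing T]
    (g : S →+* T) (f : R →+* S[X]) (x : S[X]) (p : R[X]) :
    map g (eval₂ f x p) = eval₂ ((mapRingHom g).comp f) (map g x) p := by
  have h := hom_eval₂ p f (mapRingHom g) x
  rwa [show (mapRingHom g) x = map g x from rfl,
    show (mapRingHom g) (eval₂ f x p) = map g (eval₂ f x p) from rfl] at h

theorem coeff_eval₂_C_mul_X (t : R) (p : R[X]) (n : ℕ) :
    (eval₂ C (C t * X) p).coeff n = t ^ n * p.coeff n := by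
  induction p using Polynomial.induction_on' with
  | add p q hp hq => simp [eval₂_add, coeff_add, hp, hq, mul_add]
  | monomial i a =>
    rw [eval₂_monomial, mul_pow, ← C_pow, ← mul_assoc, mul_comm (C a) (C (t ^ i)),
      mul_assoc, C_mul_X_pow_eq_monomial, coeff_C_mul, coeff_monomial]
    split_ifs with h
    · subst h; ring
    · ring

/-- Twisting an exponential map by an invariant element `t`: substitute `t·U` for `U`. -/
noncomputable def twist (δ : ExponentialMap k R) (t : R) (ht : δ.Fixes t) :
    ExponentialMap k R where
  toAlgHom :=
    { toRingHom := (eval₂RingHom C (C t * X)).comp δ.toAlgHom.toRingHom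
      commutes' := fun c => by
        show eval₂ C (C t * X) (δ.toAlgHom ((algebraMap k R) c)) = algebraMap k R[X] c
        rw [δ.toAlgHom.commutes, Polynomial.algebraMap_apply, eval₂_C,
          ← Polynomial.algebraMap_apply] }
  eval_zero := fun b => by
    show eval 0 (eval₂ C (C t * X) (δ.toAlgHom b)) = b
    have : eval 0 (eval₂ C (C t * X) (δ.toAlgHom b)) = eval 0 (δ.toAlgHom b) := by
      show eval 0 ((δ.toAlgHom b).comp (C t * X)) = _
      rw [eval_comp]
      simp
    rw [this, δ.eval_zero]
  coassoc := fun b => by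
    set D := δ.toAlgHom.toRingHom with hD
    set σ : R[X] →+* R[X] := eval₂RingHom C (C t * X) with hσ
    set τ : R →+* R[X] := σ.comp D with hτ
    show map τ (σ (D b)) = eval₂ (C.comp C) (X + C X) (σ (D b))
    have hDt : D t = C t := ht
    have hτt : τ t = C t := by
      show σ (D t) = C t
      rw [hDt, hσ, coe_eval₂RingHom, eval₂_C]
    have hσDb : σ (D b) = eval₂ C (C t * X) (D b) := by rw [hσ, coe_eval₂RingHom]
    -- left side
    have hL : map τ (σ (D b)) = eval₂ (C.comp τ) (C (C t) * X) (D b) := by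
      rw [hσDb, mapRingHom_eval₂']
      congr 1
      · ext r
        simp
      · simp [hτt]
    -- right side
    have hR : eval₂ (C.comp C) (X + C X) (σ (D b)) =
        eval₂ (C.comp C) (C (C t) * (X + C X)) (D b) := by
      rw [hσDb,
        show eval₂ (C.comp C) (X + C X) (eval₂ C (C t * X) (D b)) =
          eval₂RingHom (C.comp C) (X + C X) (eval₂ C (C t * X) (D b)) from rfl,
        hom_eval₂]
      congr 1
      · ext r
        simp
      · simp
    rw [hL, hR]
    -- now use δ.coassoc transported by Ψ
    have hΨ := congrArg (⇑(eval₂RingHom (C.comp σ) (C (C t) * X))) (δ.coassoc b)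
    rw [eval₂RingHom_map', hom_eval₂] at hΨ
    have e1 : (C.comp σ).comp D = C.comp τ := by rw [hτ, RingHom.comp_assoc]
    have e2 : (eval₂RingHom (C.comp σ) (C (C t) * X)).comp (C.comp C) =
        C.comp (C : R →+* R[X]) := by
      ext r
      simp [hσ]
    have e3 : (eval₂RingHom (C.comp σ) (C (C t) * X)) (X + C X) =
        C (C t) * (X + C X) := by
      have hσX : σ X = C t * X := by rw [hσ, coe_eval₂RingHom, eval₂_X]
      rw [coe_eval₂RingHom, eval₂_add, eval₂_X, eval₂_C, RingHom.comp_apply, hσX,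
        map_mul, mul_add]
    rw [e1, e2, e3] at hΨ
    exact hΨ

end ExponentialMap

namespace ExponentialMap

variable {k R : Type*} [CommRing k] [CommRing R] [Algebra k R]

theorem twist_apply (δ : ExponentialMap k R) (t : R) (ht : δ.Fixes t) (x : R) :
    (δ.twist t ht).toAlgHom x = eval₂ C (C t * X) (δ.toAlgHom x) := rfl

theorem twist_fixes (δ : ExponentialMap k R) {t : R} (ht : δ.Fixes t) {y : R}
    (hy : δ.Fixes y) : (δ.twist t ht).Fixes y := by
  unfold Fixes at hy ⊢
  rw [twist_apply, hy, eval₂_C]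

section Localize

variable (M : Submonoid R) (L : Type*) [CommRing L] [Algebra R L] [IsLocalization M L]
  [Algebra k L] [IsScalarTower k R L]

theorem localize_units (δ : ExponentialMap k R) (hM : ∀ s ∈ M, δ.Fixes s) : ∀ y : M,
    IsUnit (((mapRingHom (algebraMap R L)).comp δ.toAlgHom.toRingHom) y) := by
  intro y
  have h1 : ((mapRingHom (algebraMap R L)).comp δ.toAlgHom.toRingHom) y =
      C (algebraMap R L y) := by
    show map (algebraMap R L) (δ.toAlgHom y) = _
    rw [show δ.toAlgHom (y : R) = C (y : R) from hM y y.2, map_C]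
  rw [h1]
  exact (IsLocalization.map_units L y).map (C : L →+* L[X])

/-- The canonical extension of an exponential map to a localization at invariant
elements. -/
noncomputable def localize (δ : ExponentialMap k R) (hM : ∀ s ∈ M, δ.Fixes s) :
    ExponentialMap k L where
  toAlgHom :=
    { toRingHom := IsLocalization.lift (M := M) (S := L) (localize_units M L δ hM)
      commutes' := fun c => by
        show IsLocalization.lift (localize_units M L δ hM) (algebraMap k L c) = _
        rw [IsScalarTower.algebraMap_apply k R L, IsLocalization.lift_eq]
        show map (algebraMap R L) (δ.toAlgHom (algebraMap k R c)) = _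
        rw [δ.toAlgHom.commutes, Polynomial.algebraMap_apply, map_C,
          ← IsScalarTower.algebraMap_apply k R L, ← Polynomial.algebraMap_apply] }
  eval_zero := by
    have key : (evalRingHom (0 : L)).comp
        (IsLocalization.lift (M := M) (S := L) (localize_units M L δ hM)) =
        RingHom.id L := by
      apply IsLocalization.ringHom_ext M
      ext b
      show eval 0 (IsLocalization.lift (localize_units M L δ hM) (algebraMap R L b)) = _
      rw [IsLocalization.lift_eq]
      show eval 0 (map (algebraMap R L) (δ.toAlgHom b)) = _
      rw [← coeff_zero_eq_eval_zero, coeff_map, coeff_zero_eq_eval_zero, δ.eval_zero]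
      rfl
    intro x
    exact RingHom.congr_fun key x
  coassoc := by
    set ι := algebraMap R L with hι
    set lf := IsLocalization.lift (M := M) (S := L) (localize_units M L δ hM) with hlf
    have hlifteq : ∀ b : R, lf (ι b) = map ι (δ.toAlgHom b) := fun b =>
      IsLocalization.lift_eq _ b
    have key : (mapRingHom lf).comp lf =
        (eval₂RingHom ((C : L[X] →+* L[X][X]).comp C) (X + C X)).comp lf := by
      apply IsLocalization.ringHom_ext M
      refine RingHom.ext fun b => ?_
      show map lf (lf (ι b)) = eval₂ (C.comp C) (X + C X) (lf (ι b))
      rw [hlifteq, map_map]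
      have hcomp : lf.comp ι = (mapRingHom ι).comp δ.toAlgHom.toRingHom :=
        RingHom.ext fun b => hlifteq b
      rw [hcomp, ← map_map, δ.coassoc, mapRingHom_eval₂', eval₂_map]
      congr 1
      · ext r
        simp
      · simp
    intro x
    exact RingHom.congr_fun key x

theorem localize_apply (δ : ExponentialMap k R) (hM : ∀ s ∈ M, δ.Fixes s) (b : R) :
    (localize M L δ hM).toAlgHom (algebraMap R L b) =
      map (algebraMap R L) (δ.toAlgHom b) :=
  IsLocalization.lift_eq _ b

end Localize

section Pullback

variable {L : Type*} [CommRing L] [Algebra k L]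

variable (τ : ExponentialMap k L) (j : R →ₐ[k] L)

noncomputable def pullbackFun (h : ∀ b : R, τ.toAlgHom (j b) ∈ Polynomial.lifts (j : R →+* L))
    (b : R) : R[X] :=
  Classical.choose ((Polynomial.mem_lifts _).mp (h b))

theorem pullbackFun_spec (h : ∀ b : R, τ.toAlgHom (j b) ∈ Polynomial.lifts (j : R →+* L))
    (b : R) : map (j : R →+* L) (pullbackFun τ j h b) = τ.toAlgHom (j b) :=
  Classical.choose_spec ((Polynomial.mem_lifts _).mp (h b))

noncomputable def pullbackHom (hjinj : Function.Injective j)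
    (h : ∀ b : R, τ.toAlgHom (j b) ∈ Polynomial.lifts (j : R →+* L)) : R →ₐ[k] R[X] :=
  have hmapinj : Function.Injective (map (j : R →+* L)) := map_injective _ hjinj
  { toFun := pullbackFun τ j h
    map_one' := hmapinj (by simp [pullbackFun_spec])
    map_mul' := fun x y => hmapinj (by simp [pullbackFun_spec])
    map_zero' := hmapinj (by simp [pullbackFun_spec])
    map_add' := fun x y => hmapinj (by simp [pullbackFun_spec])
    commutes' := fun c => hmapinj (by
      simp [pullbackFun_spec, Polynomial.algebraMap_apply, j.commutes]) }

theorem pullbackHom_spec (hjinj : Function.Injective j)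
    (h : ∀ b : R, τ.toAlgHom (j b) ∈ Polynomial.lifts (j : R →+* L)) (b : R) :
    map (j : R →+* L) (pullbackHom τ j hjinj h b) = τ.toAlgHom (j b) :=
  pullbackFun_spec τ j h b

/-- Pull back an exponential map along an injective algebra map whose image is
stable (coefficientwise) under the exponential map. -/
noncomputable def pullback (hjinj : Function.Injective j)
    (h : ∀ b : R, τ.toAlgHom (j b) ∈ Polynomial.lifts (j : R →+* L)) :
    ExponentialMap k R where
  toAlgHom := pullbackHom τ j hjinj h
  eval_zero := fun b => by
    apply hjinj
    show (j : R →+* L) (eval 0 (pullbackHom τ j hjinj h b)) = j b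
    rw [← coeff_zero_eq_eval_zero, ← coeff_map, pullbackHom_spec,
      coeff_zero_eq_eval_zero, τ.eval_zero]
  coassoc := fun b => by
    set F := (pullbackHom τ j hjinj h).toRingHom with hF
    have hFspec : ∀ r : R, map (j : R →+* L) (F r) = τ.toAlgHom (j r) := fun r =>
      pullbackHom_spec τ j hjinj h r
    apply map_injective (mapRingHom (j : R →+* L)) (map_injective _ hjinj)
    show map (mapRingHom (j : R →+* L)) (map F (F b)) =
      map (mapRingHom (j : R →+* L)) (eval₂ (C.comp C) (X + C X) (F b))
    have hcomp : (mapRingHom (j : R →+* L)).comp F =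
        τ.toAlgHom.toRingHom.comp (j : R →+* L) :=
      RingHom.ext fun r => hFspec r
    rw [map_map, hcomp, ← map_map, hFspec, τ.coassoc, ← hFspec, eval₂_map,
      mapRingHom_eval₂']
    congr 1
    · ext r
      simp
    · simp

theorem pullback_spec (hjinj : Function.Injective j)
    (h : ∀ b : R, τ.toAlgHom (j b) ∈ Polynomial.lifts (j : R →+* L)) (b : R) :
    map (j : R →+* L) ((pullback τ j hjinj h).toAlgHom b) = τ.toAlgHom (j b) :=
  pullbackFun_spec τ j h b

theorem forall_mem_lifts [Algebra.FiniteType k R] (G : Finset R)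
    (hGtop : Algebra.adjoin k (G : Set R) = ⊤)
    (hg : ∀ g ∈ G, τ.toAlgHom (j g) ∈ Polynomial.lifts (j : R →+* L)) (b : R) :
    τ.toAlgHom (j b) ∈ Polynomial.lifts (j : R →+* L) := by
  let Q : Subalgebra k (Polynomial L) :=
    { Polynomial.lifts (j : R →+* L) with
      algebraMap_mem' := fun c => (Polynomial.mem_lifts _).mpr
        ⟨C (algebraMap k R c), by
          rw [map_C]
          simp [Polynomial.algebraMap_apply, j.commutes]⟩ }
  have hQ : Algebra.adjoin k (G : Set R) ≤ Q.comap (τ.toAlgHom.comp j) :=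
    Algebra.adjoin_le (fun g hgG => hg g hgG)
  exact hQ (hGtop ▸ Algebra.mem_top)

end Pullback

theorem eval₂_C_mul_X_cancel {t v : R} (h : t * v = 1) (p : R[X]) :
    eval₂ C (C v * X) (eval₂ C (C t * X) p) = p := by
  rw [show eval₂ C (C v * X) (eval₂ C (C t * X) p) =
    eval₂RingHom C (C v * X) (eval₂ C (C t * X) p) from rfl, hom_eval₂]
  have e1 : (eval₂RingHom C (C v * X)).comp C = (C : R →+* R[X]) := by
    ext r
    simp
  have e2 : (eval₂RingHom (C : R →+* R[X]) (C v * X)) (C t * X) = X := by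
    show eval₂ C (C v * X) (C t * X) = X
    rw [eval₂_mul, eval₂_C, eval₂_X, ← mul_assoc, ← C_mul, h, C_1, one_mul]
  rw [e1, e2, eval₂_C_X]

end ExponentialMap


theorem mem_mlSet_iff {k B : Type*} [CommRing k] [CommRing B] [Algebra k B]
    {A : Set B} {b : B} :
    b ∈ mlSet k A ↔ ∀ δ : ExponentialMap k B, (∀ a ∈ A, δ.Fixes a) → δ.Fixes b :=
  Iff.rfl


/-- Let `k` be a field, `A` an affine `k`-domain, `B` a domain that is
a finitely generated `A`-algebra with injective structure map, and `S` a multiplicatively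
closed subset of `A \ {0}`.  Then `ML_{S⁻¹A}(S⁻¹B) = S⁻¹(ML_A(B))`: an element of the
localization `S⁻¹B` belongs to the Makar-Limanov invariant of `S⁻¹B` relative to the
subring `S⁻¹A` if and only if it is of the form `m/s` with `m ∈ ML_A(B)` and `s ∈ S`. -/
theorem stmt_2 {k A B : Type*} [Field k]
    [CommRing A] [IsDomain A] [Algebra k A] [Algebra.FiniteType k A]
    [CommRing B] [IsDomain B] [Algebra k B] [Algebra A B] [IsScalarTower k A B]
    [Algebra.FiniteType A B]
    (hinj : Function.Injective (algebraMap A B))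
    (S : Submonoid A) (hS : ∀ s ∈ S, (s : A) ≠ 0) :
    mlSet k
        {x : Localization (S.map (algebraMap A B)) |
          ∃ a : A, ∃ s ∈ S,
            x * algebraMap B (Localization (S.map (algebraMap A B))) (algebraMap A B s) =
              algebraMap B (Localization (S.map (algebraMap A B))) (algebraMap A B a)} =
      {x : Localization (S.map (algebraMap A B)) |
        ∃ m ∈ mlSet k (Set.range (algebraMap A B)), ∃ s ∈ S,
          x * algebraMap B (Localization (S.map (algebraMap A B))) (algebraMap A B s) =
            algebraMap B (Localization (S.map (algebraMap A B))) m} := by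
  classical
  have hA0 : ∀ s ∈ S, algebraMap A B s ≠ 0 := fun s hs h0 =>
    hS s hs (hinj (h0.trans (map_zero _).symm))
  have hle : S.map (algebraMap A B) ≤ nonZeroDivisors B := by
    rintro _ ⟨s, hs, rfl⟩
    exact mem_nonZeroDivisors_of_ne_zero (hA0 s hs)
  haveI : IsDomain (Localization (S.map (algebraMap A B))) :=
    IsLocalization.isDomain_localization hle
  have hιinj : Function.Injective
      (algebraMap B (Localization (S.map (algebraMap A B)))) :=
    IsLocalization.injective _ hle
  haveI hBft : Algebra.FiniteType k B := Algebra.FiniteType.trans ‹Algebra.FiniteType k A› ‹Algebra.FiniteType A B›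
  have hι0 : ∀ b : B, b ≠ 0 →
      algebraMap B (Localization (S.map (algebraMap A B))) b ≠ 0 := fun b hb h0 =>
    hb (hιinj (h0.trans (map_zero _).symm))
  ext x
  simp only [Set.mem_setOf_eq, mem_mlSet_iff]
  constructor
  · -- ML_{S⁻¹A}(S⁻¹B) ⊆ S⁻¹(ML_A B)
    intro hx
    obtain ⟨⟨m, s'⟩, hxs⟩ := IsLocalization.surj (S.map (algebraMap A B)) x
    obtain ⟨s, hsS, hs'⟩ := s'.2
    refine ⟨m, ?_, s, hsS, by rw [hs']; exact hxs⟩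
    intro δ hδ
    have hM : ∀ u ∈ S.map (algebraMap A B), δ.Fixes u := by
      rintro _ ⟨s₀, _, rfl⟩
      exact hδ _ ⟨s₀, rfl⟩
    set δ' := ExponentialMap.localize (S.map (algebraMap A B))
      (Localization (S.map (algebraMap A B))) δ hM with hδ'def
    have hδ'ι : ∀ b : B, δ'.toAlgHom (algebraMap B _ b) =
        map (algebraMap B (Localization (S.map (algebraMap A B)))) (δ.toAlgHom b) :=
      fun b => ExponentialMap.localize_apply _ _ δ hM b
    have hfixesδ' : ∀ b : B, δ.Fixes b →
        δ'.Fixes (algebraMap B (Localization (S.map (algebraMap A B))) b) := by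
      intro b hb
      unfold ExponentialMap.Fixes at *
      rw [hδ'ι, hb, map_C]
    have hδ'A : ∀ y ∈ {x : Localization (S.map (algebraMap A B)) |
          ∃ a : A, ∃ s ∈ S,
            x * algebraMap B (Localization (S.map (algebraMap A B))) (algebraMap A B s) =
              algebraMap B (Localization (S.map (algebraMap A B))) (algebraMap A B a)},
        δ'.Fixes y := by
      rintro y ⟨a, s₀, hs₀S, hy⟩
      exact δ'.fixes_of_mul_eq (hfixesδ' _ (hδ _ ⟨s₀, rfl⟩)) (hfixesδ' _ (hδ _ ⟨a, rfl⟩))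
        (hι0 _ (hA0 s₀ hs₀S)) hy
    have hxfix : δ'.Fixes x := hx δ' hδ'A
    have hs'fix : δ'.Fixes (algebraMap B (Localization (S.map (algebraMap A B))) s') :=
      hfixesδ' _ (hM _ s'.2)
    have hmfix : δ'.Fixes (algebraMap B (Localization (S.map (algebraMap A B))) m) := by
      unfold ExponentialMap.Fixes at *
      rw [← hxs, map_mul, hxfix, hs'fix, ← map_mul]
    unfold ExponentialMap.Fixes at *
    apply map_injective (algebraMap B (Localization (S.map (algebraMap A B)))) hιinj
    rw [hδ'ι] at hmfix
    rw [hmfix, map_C]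
  · -- S⁻¹(ML_A B) ⊆ ML_{S⁻¹A}(S⁻¹B)
    rintro ⟨m, hm, s, hsS, hxm⟩
    intro δ' hδ'A
    obtain ⟨G, hG⟩ := hBft.out
    have key : ∀ z : Localization (S.map (algebraMap A B)),
        ∃ u : S.map (algebraMap A B), ∃ b : B,
          z * algebraMap B _ ↑u = algebraMap B _ b := by
      intro z
      obtain ⟨⟨b, u⟩, h⟩ := IsLocalization.surj (S.map (algebraMap A B)) z
      exact ⟨u, b, h⟩
    choose u w hw using key
    set ι := algebraMap B (Localization (S.map (algebraMap A B))) with hιdef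
    set N := G.sup fun g => (δ'.toAlgHom (ι g)).natDegree with hN
    set s₀ : ↥(S.map (algebraMap A B)) :=
      ∏ p ∈ G ×ˢ Finset.range (N+1), u ((δ'.toAlgHom (ι p.1)).coeff p.2) with hs₀
    have hAset : ∀ a : A, δ'.Fixes (ι (algebraMap A B a)) := by
      intro a
      apply hδ'A
      exact ⟨a, 1, S.one_mem, by simp⟩
    have ht_fix : δ'.Fixes (ι ↑s₀) := by
      obtain ⟨sA, hsA, hsAeq⟩ := s₀.2
      rw [← hsAeq]
      exact hAset sA
    set τ := δ'.twist (ι ↑s₀) ht_fix with hτdef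
    set j := IsScalarTower.toAlgHom k B (Localization (S.map (algebraMap A B))) with hjdef
    have hjι : ∀ b, j b = ι b := fun _ => rfl
    have hjinj : Function.Injective j := hιinj
    have hgen : ∀ g ∈ G, τ.toAlgHom (j g) ∈ Polynomial.lifts (j : B →+* _) := by
      intro g hgG
      rw [Polynomial.lifts_iff_coeff_lifts]
      intro n
      rw [hjι, ExponentialMap.twist_apply, ExponentialMap.coeff_eval₂_C_mul_X]
      rcases n with _ | n
      · rw [pow_zero, one_mul, coeff_zero_eq_eval_zero, δ'.eval_zero]
        exact ⟨g, rfl⟩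
      · by_cases hn : n + 1 < N + 1
        · have hmem : (g, n+1) ∈ G ×ˢ Finset.range (N+1) :=
            Finset.mem_product.mpr ⟨hgG, Finset.mem_range.mpr hn⟩
          obtain ⟨c, hc⟩ := Finset.dvd_prod_of_mem
            (fun p => u ((δ'.toAlgHom (ι p.1)).coeff p.2)) hmem
          set z := (δ'.toAlgHom (ι g)).coeff (n+1) with hz
          have h1 : (↑s₀ : B) = ↑(u z) * ↑c := by
            rw [hs₀, hc]
            rfl
          have h2 : (ι ↑s₀) ^ (n+1) * z = ι ((↑s₀ : B)^n * (w z * ↑c)) := by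
            calc (ι ↑s₀)^(n+1) * z
                = (ι ↑s₀)^n * ((z * ι ↑(u z)) * ι ↑c) := by
                  rw [pow_succ, h1, map_mul]; ring
              _ = (ι ↑s₀)^n * (ι (w z) * ι ↑c) := by rw [hw z]
              _ = ι ((↑s₀ : B)^n * (w z * ↑c)) := by rw [map_mul, map_mul, map_pow]
          exact ⟨(↑s₀ : B)^n * (w z * ↑c), h2.symm⟩
        · have hNle : (δ'.toAlgHom (ι g)).natDegree ≤ N :=
            Finset.le_sup (f := fun g => (δ'.toAlgHom (ι g)).natDegree) hgG
          have hdeg : (δ'.toAlgHom (ι g)).natDegree < n + 1 := by omega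
          rw [coeff_eq_zero_of_natDegree_lt hdeg, mul_zero]
          exact ⟨0, by rw [map_zero]⟩
    have hall : ∀ b, τ.toAlgHom (j b) ∈ Polynomial.lifts (j : B →+* _) :=
      ExponentialMap.forall_mem_lifts τ j G hG hgen
    set δ := τ.pullback j hjinj hall with hδdef
    have hδspec : ∀ b, map (j : B →+* _) (δ.toAlgHom b) = τ.toAlgHom (j b) :=
      ExponentialMap.pullback_spec τ j hjinj hall
    have hδA : ∀ a ∈ Set.range (algebraMap A B), δ.Fixes a := by
      rintro _ ⟨a, rfl⟩
      have h2 : τ.Fixes (ι (algebraMap A B a)) := δ'.twist_fixes ht_fix (hAset a)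
      unfold ExponentialMap.Fixes at *
      apply map_injective (j : B →+* Localization (S.map (algebraMap A B))) hjinj
      rw [hδspec, map_C]
      exact h2
    have hmfix : δ.Fixes m := hm δ hδA
    have hτm : τ.toAlgHom (ι m) = C (ι m) := by
      have h3 := hδspec m
      rw [show δ.toAlgHom m = C m from hmfix, map_C] at h3
      exact h3.symm
    obtain ⟨v, hv⟩ := (IsLocalization.map_units
      (Localization (S.map (algebraMap A B))) s₀).exists_right_inv
    have hδ'm : δ'.Fixes (ι m) := by
      show δ'.toAlgHom (ι m) = C (ι m)
      have h4 := congrArg (eval₂ C (C v * X)) hτm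
      rw [ExponentialMap.twist_apply] at h4
      rw [ExponentialMap.eval₂_C_mul_X_cancel hv, eval₂_C] at h4
      exact h4
    exact δ'.fixes_of_mul_eq (hAset s) hδ'm (hι0 _ (hA0 s hsS)) hxm
end

section
/- Let k be a field, R a factorial affine k-domain with K = Frac(R). For i = 1, 2 let B_i := R[X,Y,Z,T]/(X^d·Y − P_i(X,Z), X^e·T − Q_i(X,Y,Z)) with d, e ≥ 1, P_i ∈ R[X,Z] with deg_Z P_1(0,Z) = deg_Z P_2(0,Z) > 1 and P_i monic in Z over K, and Q_i ∈ R[X,Y,Z] monic in Y over K with deg_Y Q_1 = deg_Y Q_2 ≥ 1. Suppose there exist units λ₁, μ₁, β̃₁, g₂′ of R, δ₁(X) ∈ R[X], α̃₁(X,Z) ∈ R[X,Z], and g₁′, g₃′ ∈ R[X,Y,Z] such that P_2(λ₁X, μ₁Z + δ₁(X)) = λ₁^d·β̃₁·P_1(X,Z) + X^d·λ₁^d·α̃₁(X,Z) and Q_2(λ₁X, β̃₁Y + α̃₁(X,Z), μ₁Z + δ₁(X)) = X^e·g₁′ + g₂′·Q_1(X,Y,Z) + (X^d·Y − P_1(X,Z))·g₃′.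 Then B_1 and B_2 are isomorphic as R-algebras. -/
/-- The defining ideal of the Double Danielewski type algebra
`B_{d,e}^R = R[X,Y,Z,T]/(X^d·Y − P(X,Z), X^e·T − Q(X,Y,Z))`.
Variables of `Fin 4`: `0 = X`, `1 = Y`, `2 = Z`, `3 = T`. -/
noncomputable def ddIdeal (R : Type*) [CommRing R] (d e : ℕ)
    (P : MvPolynomial (Fin 2) R) (Q : MvPolynomial (Fin 3) R) :
    Ideal (MvPolynomial (Fin 4) R) :=
  Ideal.span
    { MvPolynomial.X 0 ^ d * MvPolynomial.X 1 -
        MvPolynomial.rename (![0, 2] : Fin 2 → Fin 4) P,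
      MvPolynomial.X 0 ^ e * MvPolynomial.X 3 -
        MvPolynomial.rename (![0, 1, 2] : Fin 3 → Fin 4) Q }

/-- For `P = P(X,Z) ∈ R[X,Z]`, the polynomial `P(0,Z) ∈ R[Z]`. -/
noncomputable def subZeroP {R : Type*} [CommRing R] (P : MvPolynomial (Fin 2) R) :
    Polynomial R :=
  MvPolynomial.aeval ![0, Polynomial.X] P

/-- `P(X,Z)` viewed as a polynomial in `Z` with coefficients in `R[X]`. -/
noncomputable def asPolyZ {R : Type*} [CommRing R] (P : MvPolynomial (Fin 2) R) :
    Polynomial (Polynomial R) :=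
  MvPolynomial.aeval ![Polynomial.C Polynomial.X, Polynomial.X] P

/-- `Q(X,Y,Z)` viewed as a polynomial in `Y` with coefficients in `R[X,Z]`
(variables of the coefficient ring: `0 = X`, `1 = Z`). -/
noncomputable def asPolyY {R : Type*} [CommRing R] (Q : MvPolynomial (Fin 3) R) :
    Polynomial (MvPolynomial (Fin 2) R) :=
  MvPolynomial.aeval
    ![Polynomial.C (MvPolynomial.X 0), Polynomial.X, Polynomial.C (MvPolynomial.X 1)] Q

section Stmt8Aux

open MvPolynomial

variable {R : Type*} [CommRing R]

private lemma vec2_0 {α : Type*} (a b : α) : ![a, b] (0 : Fin 2) = a := rfl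
private lemma vec2_1 {α : Type*} (a b : α) : ![a, b] (1 : Fin 2) = b := rfl
private lemma vec3_0 {α : Type*} (a b c : α) : ![a, b, c] (0 : Fin 3) = a := rfl
private lemma vec3_1 {α : Type*} (a b c : α) : ![a, b, c] (1 : Fin 3) = b := rfl
private lemma vec3_2 {α : Type*} (a b c : α) : ![a, b, c] (2 : Fin 3) = c := rfl
private lemma vec4_0 {α : Type*} (a b c d : α) : ![a, b, c, d] (0 : Fin 4) = a := rfl
private lemma vec4_1 {α : Type*} (a b c d : α) : ![a, b, c, d] (1 : Fin 4) = b := rfl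
private lemma vec4_2 {α : Type*} (a b c d : α) : ![a, b, c, d] (2 : Fin 4) = c := rfl
private lemma vec4_3 {α : Type*} (a b c d : α) : ![a, b, c, d] (3 : Fin 4) = d := rfl

private lemma comp012_02 : (![0, 1, 2] : Fin 3 → Fin 4) ∘ (![0, 2] : Fin 2 → Fin 3)
    = (![0, 2] : Fin 2 → Fin 4) := by
  funext i; fin_cases i <;> rfl

private lemma aeval_rename02 {S : Type*} [CommRing S] [Algebra R S] (v : Fin 4 → S)
    (p : MvPolynomial (Fin 2) R) :
    aeval v (rename (![0, 2] : Fin 2 → Fin 4) p) = aeval ![v 0, v 2] p := by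
  rw [aeval_rename]
  have h : v ∘ (![0, 2] : Fin 2 → Fin 4) = ![v 0, v 2] := by
    funext i; fin_cases i <;> rfl
  rw [h]

private lemma aeval_rename012 {S : Type*} [CommRing S] [Algebra R S] (v : Fin 4 → S)
    (p : MvPolynomial (Fin 3) R) :
    aeval v (rename (![0, 1, 2] : Fin 3 → Fin 4) p) = aeval ![v 0, v 1, v 2] p := by
  rw [aeval_rename]
  have h : v ∘ (![0, 1, 2] : Fin 3 → Fin 4) = ![v 0, v 1, v 2] := by
    funext i; fin_cases i <;> rfl
  rw [h]

private lemma algHom_aeval2 {S T : Type*} [CommRing S] [CommRing T] [Algebra R S] [Algebra R T]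
    (φ : S →ₐ[R] T) (a b : S) (p : MvPolynomial (Fin 2) R) :
    φ (aeval ![a, b] p) = aeval ![φ a, φ b] p := by
  rw [comp_aeval_apply]
  have h : (fun i => φ (![a, b] i)) = ![φ a, φ b] := by
    funext i; fin_cases i <;> rfl
  rw [h]

private lemma algHom_aeval3 {S T : Type*} [CommRing S] [CommRing T] [Algebra R S] [Algebra R T]
    (φ : S →ₐ[R] T) (a b c : S) (p : MvPolynomial (Fin 3) R) :
    φ (aeval ![a, b, c] p) = aeval ![φ a, φ b, φ c] p := by
  rw [comp_aeval_apply]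
  have h : (fun i => φ (![a, b, c] i)) = ![φ a, φ b, φ c] := by
    funext i; fin_cases i <;> rfl
  rw [h]

private lemma aeval_X02 (p : MvPolynomial (Fin 2) R) :
    aeval ![(X 0 : MvPolynomial (Fin 4) R), X 2] p
      = rename (![0, 2] : Fin 2 → Fin 4) p := by
  rw [← aeval_X_left_apply (rename (![0, 2] : Fin 2 → Fin 4) p), aeval_rename]
  have h : (X ∘ (![0, 2] : Fin 2 → Fin 4) : Fin 2 → MvPolynomial (Fin 4) R)
      = ![X 0, X 2] := by
    funext i; fin_cases i <;> rfl
  rw [h]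

private lemma aeval_X012 (p : MvPolynomial (Fin 3) R) :
    aeval ![(X 0 : MvPolynomial (Fin 4) R), X 1, X 2] p
      = rename (![0, 1, 2] : Fin 3 → Fin 4) p := by
  rw [← aeval_X_left_apply (rename (![0, 1, 2] : Fin 3 → Fin 4) p), aeval_rename]
  have h : (X ∘ (![0, 1, 2] : Fin 3 → Fin 4) : Fin 3 → MvPolynomial (Fin 4) R)
      = ![X 0, X 1, X 2] := by
    funext i; fin_cases i <;> rfl
  rw [h]

end Stmt8Aux
section Stmt8Key

open MvPolynomial

private lemma stmt8_key {R : Type*} [CommRing R] (d e : ℕ)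
    (P₁ P₂ : MvPolynomial (Fin 2) R) (Q₁ Q₂ : MvPolynomial (Fin 3) R)
    (lam₁ mu₁ beta₁ g₂' : Rˣ) (delta₁ : Polynomial R) (alpha₁ : MvPolynomial (Fin 2) R)
    (g₁' g₃' : MvPolynomial (Fin 3) R)
    (hP : aeval ![C (lam₁ : R) * X 0,
          C (mu₁ : R) * X 1 + Polynomial.aeval (X 0) delta₁] P₂ =
      C ((lam₁ : R) ^ d * (beta₁ : R)) * P₁ + X 0 ^ d * C ((lam₁ : R) ^ d) * alpha₁)
    (hQ : aeval ![C (lam₁ : R) * X 0,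
          C (beta₁ : R) * X 1 + rename (![0, 2] : Fin 2 → Fin 3) alpha₁,
          C (mu₁ : R) * X 2 + Polynomial.aeval (X 0) delta₁] Q₂ =
      X 0 ^ e * g₁' + C ((g₂' : R)) * Q₁ +
        (X 0 ^ d * X 1 - rename (![0, 2] : Fin 2 → Fin 3) P₁) * g₃') :
    Nonempty ((MvPolynomial (Fin 4) R ⧸ ddIdeal R d e P₁ Q₁) ≃ₐ[R]
      (MvPolynomial (Fin 4) R ⧸ ddIdeal R d e P₂ Q₂)) := by
  classical
  -- images of the variables under σ
  set A0 : MvPolynomial (Fin 4) R := C (lam₁ : R) * X 0 with hA0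
  set A1 : MvPolynomial (Fin 4) R :=
    C (beta₁ : R) * X 1 + rename (![0, 2] : Fin 2 → Fin 4) alpha₁ with hA1
  set A2 : MvPolynomial (Fin 4) R :=
    C (mu₁ : R) * X 2 + Polynomial.aeval (X (0 : Fin 4)) delta₁ with hA2
  set A3 : MvPolynomial (Fin 4) R :=
    C ((↑lam₁⁻¹ : R) ^ e) * (rename (![0, 1, 2] : Fin 3 → Fin 4) g₁' + C (g₂' : R) * X 3)
    with hA3
  -- images of the variables under the inverse τ
  set B0 : MvPolynomial (Fin 4) R := C (↑lam₁⁻¹ : R) * X 0 with hB0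
  set B2 : MvPolynomial (Fin 4) R :=
    C (↑mu₁⁻¹ : R) * (X 2 - Polynomial.aeval B0 delta₁) with hB2
  set B1 : MvPolynomial (Fin 4) R :=
    C (↑beta₁⁻¹ : R) * (X 1 - aeval ![B0, B2] alpha₁) with hB1
  set B3 : MvPolynomial (Fin 4) R :=
    C (↑g₂'⁻¹ : R) * (C ((lam₁ : R) ^ e) * X 3 - aeval ![B0, B1, B2] g₁') with hB3
  set σh : MvPolynomial (Fin 4) R →ₐ[R] MvPolynomial (Fin 4) R :=
    aeval ![A0, A1, A2, A3] with hσh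
  set τh : MvPolynomial (Fin 4) R →ₐ[R] MvPolynomial (Fin 4) R :=
    aeval ![B0, B1, B2, B3] with hτh
  -- unit facts
  have ulam : (C (lam₁ : R) : MvPolynomial (Fin 4) R) * C (↑lam₁⁻¹ : R) = 1 := by
    rw [← C_mul, Units.mul_inv, C_1]
  have ulam' : (C (↑lam₁⁻¹ : R) : MvPolynomial (Fin 4) R) * C (lam₁ : R) = 1 := by
    rw [← C_mul, Units.inv_mul, C_1]
  have umu : (C (mu₁ : R) : MvPolynomial (Fin 4) R) * C (↑mu₁⁻¹ : R) = 1 := by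
    rw [← C_mul, Units.mul_inv, C_1]
  have umu' : (C (↑mu₁⁻¹ : R) : MvPolynomial (Fin 4) R) * C (mu₁ : R) = 1 := by
    rw [← C_mul, Units.inv_mul, C_1]
  have ubeta : (C (beta₁ : R) : MvPolynomial (Fin 4) R) * C (↑beta₁⁻¹ : R) = 1 := by
    rw [← C_mul, Units.mul_inv, C_1]
  have ubeta' : (C (↑beta₁⁻¹ : R) : MvPolynomial (Fin 4) R) * C (beta₁ : R) = 1 := by
    rw [← C_mul, Units.inv_mul, C_1]
  have ug : (C (g₂' : R) : MvPolynomial (Fin 4) R) * C (↑g₂'⁻¹ : R) = 1 := by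
    rw [← C_mul, Units.mul_inv, C_1]
  have ug' : (C (↑g₂'⁻¹ : R) : MvPolynomial (Fin 4) R) * C (g₂' : R) = 1 := by
    rw [← C_mul, Units.inv_mul, C_1]
  have ue : (C ((lam₁ : R) ^ e) : MvPolynomial (Fin 4) R) * C ((↑lam₁⁻¹ : R) ^ e) = 1 := by
    rw [← C_mul, ← mul_pow, Units.mul_inv, one_pow, C_1]
  have ue' : (C ((↑lam₁⁻¹ : R) ^ e) : MvPolynomial (Fin 4) R) * C ((lam₁ : R) ^ e) = 1 := by
    rw [← C_mul, ← mul_pow, Units.inv_mul, one_pow, C_1]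
  -- τ ∘ σ on variables
  have t0 : τh A0 = X 0 := by
    rw [hA0, hτh, map_mul, aeval_C, aeval_X, algebraMap_eq, vec4_0, hB0, ← mul_assoc,
      ulam, one_mul]
  have t2 : τh A2 = X 2 := by
    rw [hA2, hτh, map_add, map_mul, aeval_C, aeval_X, algebraMap_eq, vec4_2,
      ← Polynomial.aeval_algHom_apply, aeval_X, vec4_0, hB2]
    linear_combination (X (2 : Fin 4) - Polynomial.aeval B0 delta₁) * umu
  have t1 : τh A1 = X 1 := by
    rw [hA1, hτh, map_add, map_mul, aeval_C, aeval_X, algebraMap_eq, vec4_1,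
      aeval_rename02, vec4_0, vec4_2, hB1]
    linear_combination (X (1 : Fin 4) - aeval ![B0, B2] alpha₁) * ubeta
  have t3 : τh A3 = X 3 := by
    rw [hA3, hτh, map_mul, map_add, map_mul, aeval_C, aeval_C, aeval_X, algebraMap_eq,
      vec4_3, aeval_rename012, vec4_0, vec4_1, vec4_2, hB3]
    linear_combination
      (C ((↑lam₁⁻¹ : R) ^ e) * (C ((lam₁ : R) ^ e) * X (3 : Fin 4)
        - aeval ![B0, B1, B2] g₁')) * ug + X (3 : Fin 4) * ue'
  -- σ ∘ τ on variables
  have s0 : σh B0 = X 0 := by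
    rw [hB0, hσh, map_mul, aeval_C, aeval_X, algebraMap_eq, vec4_0, hA0, ← mul_assoc,
      ulam', one_mul]
  have s2 : σh B2 = X 2 := by
    rw [hB2, hσh, map_mul, map_sub, aeval_C, aeval_X, algebraMap_eq, vec4_2,
      ← Polynomial.aeval_algHom_apply, ← hσh, s0, hA2]
    linear_combination (X (2 : Fin 4)) * umu'
  have s1 : σh B1 = X 1 := by
    rw [hB1, hσh, map_mul, map_sub, aeval_C, aeval_X, algebraMap_eq, vec4_1, ← hσh,
      algHom_aeval2, s0, s2, aeval_X02, hA1]
    linear_combination (X (1 : Fin 4)) * ubeta'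
  have s3 : σh B3 = X 3 := by
    rw [hB3, hσh, map_mul, map_sub, map_mul, aeval_C, aeval_C, aeval_X, algebraMap_eq,
      vec4_3, ← hσh, algHom_aeval3, s0, s1, s2, aeval_X012, hA3]
    linear_combination
      (C ((↑g₂'⁻¹ : R) : R) * (rename (![0, 1, 2] : Fin 3 → Fin 4) g₁'
        + C ((g₂' : R) : R) * X (3 : Fin 4))) * ue + X (3 : Fin 4) * ug'
  -- the compositions are the identity
  have hστ : σh.comp τh = AlgHom.id R (MvPolynomial (Fin 4) R) := by
    apply MvPolynomial.algHom_ext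
    intro i
    simp only [AlgHom.coe_comp, Function.comp_apply, AlgHom.id_apply]
    fin_cases i
    · rw [hτh, aeval_X]; exact s0
    · rw [hτh, aeval_X]; exact s1
    · rw [hτh, aeval_X]; exact s2
    · rw [hτh, aeval_X]; exact s3
  have hτσ : τh.comp σh = AlgHom.id R (MvPolynomial (Fin 4) R) := by
    apply MvPolynomial.algHom_ext
    intro i
    simp only [AlgHom.coe_comp, Function.comp_apply, AlgHom.id_apply]
    fin_cases i
    · rw [hσh, aeval_X]; exact t0
    · rw [hσh, aeval_X]; exact t1
    · rw [hσh, aeval_X]; exact t2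
    · rw [hσh, aeval_X]; exact t3
  -- the algebra automorphism
  let σe : MvPolynomial (Fin 4) R ≃ₐ[R] MvPolynomial (Fin 4) R :=
    { σh with
      invFun := τh
      left_inv := fun x => AlgHom.congr_fun hτσ x
      right_inv := fun x => AlgHom.congr_fun hστ x }
  have hcoe : ∀ x : MvPolynomial (Fin 4) R,
      (σe : MvPolynomial (Fin 4) R →+* MvPolynomial (Fin 4) R) x = σh x := fun _ => rfl
  -- transport of hP to four variables
  have hP4 : aeval ![A0, A2] P₂ =
      C ((lam₁ : R)) ^ d * C ((beta₁ : R)) * rename (![0, 2] : Fin 2 → Fin 4) P₁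
        + X 0 ^ d * C ((lam₁ : R)) ^ d * rename (![0, 2] : Fin 2 → Fin 4) alpha₁ := by
    have h := congrArg (rename (![0, 2] : Fin 2 → Fin 4)) hP
    rw [algHom_aeval2] at h
    simp only [map_add, map_mul, map_pow, rename_C, rename_X,
      ← Polynomial.aeval_algHom_apply, vec2_0, vec2_1] at h
    rw [← hA0, ← hA2] at h
    exact h
  -- transport of hQ to four variables
  have hQ4 : aeval ![A0, A1, A2] Q₂ =
      X 0 ^ e * rename (![0, 1, 2] : Fin 3 → Fin 4) g₁'
        + C (g₂' : R) * rename (![0, 1, 2] : Fin 3 → Fin 4) Q₁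
        + (X 0 ^ d * X 1 - rename (![0, 2] : Fin 2 → Fin 4) P₁)
            * rename (![0, 1, 2] : Fin 3 → Fin 4) g₃' := by
    have h := congrArg (rename (![0, 1, 2] : Fin 3 → Fin 4)) hQ
    rw [algHom_aeval3] at h
    simp only [map_add, map_mul, map_sub, map_pow, rename_C, rename_X, rename_rename,
      comp012_02, ← Polynomial.aeval_algHom_apply, vec3_0, vec3_1, vec3_2] at h
    rw [← hA0, ← hA1, ← hA2] at h
    exact h
  -- σ on the two generators
  have hσG2P : σh (X 0 ^ d * X 1 - rename (![0, 2] : Fin 2 → Fin 4) P₂)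
      = C ((lam₁ : R) ^ d * (beta₁ : R))
          * (X 0 ^ d * X 1 - rename (![0, 2] : Fin 2 → Fin 4) P₁) := by
    rw [hσh, map_sub, map_mul, map_pow, aeval_X, aeval_X, aeval_rename02,
      vec4_0, vec4_1, vec4_2, hP4, hA0, hA1]
    simp only [C_mul, C_pow]
    ring
  have hσG2Q : σh (X 0 ^ e * X 3 - rename (![0, 1, 2] : Fin 3 → Fin 4) Q₂)
      = C (g₂' : R) * (X 0 ^ e * X 3 - rename (![0, 1, 2] : Fin 3 → Fin 4) Q₁)
        - (X 0 ^ d * X 1 - rename (![0, 2] : Fin 2 → Fin 4) P₁)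
            * rename (![0, 1, 2] : Fin 3 → Fin 4) g₃' := by
    rw [hσh, map_sub, map_mul, map_pow, aeval_X, aeval_X, aeval_rename012,
      vec4_0, vec4_1, vec4_2, vec4_3, hQ4, hA0, hA3]
    have uel : ((C (lam₁ : R) : MvPolynomial (Fin 4) R)) ^ e * C ((↑lam₁⁻¹ : R) ^ e) = 1 := by
      rw [← C_pow, ← C_mul, ← mul_pow, Units.mul_inv, one_pow, C_1]
    linear_combination (X (0 : Fin 4) ^ e * rename (![0, 1, 2] : Fin 3 → Fin 4) g₁'
      + C ((g₂' : R) : R) * X (0 : Fin 4) ^ e * X (3 : Fin 4)) * uel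
  -- unit fact for the combined unit λ^d·β
  have uP : (C ((↑(lam₁ ^ d * beta₁)⁻¹ : R)) : MvPolynomial (Fin 4) R)
      * (C ((lam₁ : R) ^ d * (beta₁ : R))) = 1 := by
    have hval : ((lam₁ : R) ^ d * (beta₁ : R)) = ((lam₁ ^ d * beta₁ : Rˣ) : R) := by
      rw [Units.val_mul, Units.val_pow_eq_pow_val]
    rw [hval, ← C_mul, Units.inv_mul, C_1]
  -- the ideal is transported
  have hmap : ddIdeal R d e P₁ Q₁ =
      Ideal.map (σe : MvPolynomial (Fin 4) R →+* MvPolynomial (Fin 4) R)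
        (ddIdeal R d e P₂ Q₂) := by
    simp only [ddIdeal]
    rw [Ideal.map_span, Set.image_insert_eq, Set.image_singleton, hcoe, hcoe,
      hσG2P, hσG2Q]
    apply le_antisymm
    · rw [Ideal.span_le]
      rintro x hx
      simp only [Set.mem_insert_iff, Set.mem_singleton_iff] at hx
      rcases hx with rfl | rfl
      · rw [SetLike.mem_coe, Ideal.mem_span_pair]
        refine ⟨C ((↑(lam₁ ^ d * beta₁)⁻¹ : R)), 0, ?_⟩
        linear_combination
          ((X 0 ^ d * X 1 - rename (![0, 2] : Fin 2 → Fin 4) P₁ :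
            MvPolynomial (Fin 4) R)) * uP
      · rw [SetLike.mem_coe, Ideal.mem_span_pair]
        refine ⟨C ((↑g₂'⁻¹ : R)) * rename (![0, 1, 2] : Fin 3 → Fin 4) g₃'
            * C ((↑(lam₁ ^ d * beta₁)⁻¹ : R)), C ((↑g₂'⁻¹ : R)), ?_⟩
        linear_combination
          (C ((↑g₂'⁻¹ : R) : R) * (X 0 ^ d * X 1
              - rename (![0, 2] : Fin 2 → Fin 4) P₁)
            * rename (![0, 1, 2] : Fin 3 → Fin 4) g₃') * uP
          + ((X 0 ^ e * X 3 - rename (![0, 1, 2] : Fin 3 → Fin 4) Q₁ :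
              MvPolynomial (Fin 4) R)) * ug'
    · rw [Ideal.span_le]
      rintro x hx
      simp only [Set.mem_insert_iff, Set.mem_singleton_iff] at hx
      rcases hx with rfl | rfl
      · rw [SetLike.mem_coe, Ideal.mem_span_pair]
        exact ⟨C ((lam₁ : R) ^ d * (beta₁ : R)), 0, by ring⟩
      · rw [SetLike.mem_coe, Ideal.mem_span_pair]
        exact ⟨-(rename (![0, 1, 2] : Fin 3 → Fin 4) g₃'), C (g₂' : R), by ring⟩
  exact ⟨(Ideal.quotientEquivAlg (ddIdeal R d e P₂ Q₂) (ddIdeal R d e P₁ Q₁) σe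
    hmap).symm⟩

end Stmt8Key

/-- (Converse direction.)  Let `k` be a field and `R` a factorial
affine `k`-domain.  For `i = 1, 2` let
`Bᵢ = R[X,Y,Z,T]/(X^d·Y − Pᵢ(X,Z), X^e·T − Qᵢ(X,Y,Z))` with `d, e ≥ 1`,
`deg_Z P₁(0,Z) = deg_Z P₂(0,Z) > 1`, `Pᵢ` monic in `Z` over `K = Frac R`, and `Qᵢ`
monic in `Y` over `K` with `deg_Y Q₁ = deg_Y Q₂ ≥ 1`.  Suppose there exist units
`λ₁, μ₁, β̃₁, g₂′` of `R`, polynomials `δ₁(X) ∈ R[X]`, `α̃₁(X,Z) ∈ R[X,Z]` and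
`g₁′, g₃′ ∈ R[X,Y,Z]` with
`P₂(λ₁X, μ₁Z + δ₁(X)) = λ₁^d·β̃₁·P₁(X,Z) + X^d·λ₁^d·α̃₁(X,Z)` and
`Q₂(λ₁X, β̃₁Y + α̃₁(X,Z), μ₁Z + δ₁(X)) = X^e·g₁′ + g₂′·Q₁ + (X^d·Y − P₁(X,Z))·g₃′`.
Then `B₁ ≅ B₂` as `R`-algebras. -/
theorem stmt_8 {k R : Type*} [Field k] [CommRing R] [IsDomain R] [Algebra k R]
    [Algebra.FiniteType k R] [UniqueFactorizationMonoid R]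
    (d e : ℕ) (hd : 1 ≤ d) (he : 1 ≤ e)
    (P₁ P₂ : MvPolynomial (Fin 2) R) (Q₁ Q₂ : MvPolynomial (Fin 3) R)
    (hr₁ : 1 < (subZeroP P₁).natDegree)
    (hr : (subZeroP P₁).natDegree = (subZeroP P₂).natDegree)
    (hPmonic₁ : ∃ c : R, c ≠ 0 ∧ (asPolyZ P₁).leadingCoeff = Polynomial.C c)
    (hPmonic₂ : ∃ c : R, c ≠ 0 ∧ (asPolyZ P₂).leadingCoeff = Polynomial.C c)
    (hQmonic₁ : ∃ c : R, c ≠ 0 ∧ (asPolyY Q₁).leadingCoeff = MvPolynomial.C c)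
    (hQmonic₂ : ∃ c : R, c ≠ 0 ∧ (asPolyY Q₂).leadingCoeff = MvPolynomial.C c)
    (hs : (asPolyY Q₁).natDegree = (asPolyY Q₂).natDegree)
    (hs₁ : 1 ≤ (asPolyY Q₁).natDegree)
    (lam₁ mu₁ beta₁ g₂' : Rˣ) (delta₁ : Polynomial R) (alpha₁ : MvPolynomial (Fin 2) R)
    (g₁' g₃' : MvPolynomial (Fin 3) R)
    (hP : MvPolynomial.aeval
        ![MvPolynomial.C (lam₁ : R) * MvPolynomial.X 0,
          MvPolynomial.C (mu₁ : R) * MvPolynomial.X 1 +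
            Polynomial.aeval (MvPolynomial.X 0) delta₁] P₂ =
      MvPolynomial.C ((lam₁ : R) ^ d * (beta₁ : R)) * P₁ +
        MvPolynomial.X 0 ^ d * MvPolynomial.C ((lam₁ : R) ^ d) * alpha₁)
    (hQ : MvPolynomial.aeval
        ![MvPolynomial.C (lam₁ : R) * MvPolynomial.X 0,
          MvPolynomial.C (beta₁ : R) * MvPolynomial.X 1 +
            MvPolynomial.rename (![0, 2] : Fin 2 → Fin 3) alpha₁,
          MvPolynomial.C (mu₁ : R) * MvPolynomial.X 2 +
            Polynomial.aeval (MvPolynomial.X 0) delta₁] Q₂ =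
      MvPolynomial.X 0 ^ e * g₁' + MvPolynomial.C ((g₂' : R)) * Q₁ +
        (MvPolynomial.X 0 ^ d * MvPolynomial.X 1 -
          MvPolynomial.rename (![0, 2] : Fin 2 → Fin 3) P₁) * g₃') :
    Nonempty ((MvPolynomial (Fin 4) R ⧸ ddIdeal R d e P₁ Q₁) ≃ₐ[R]
      (MvPolynomial (Fin 4) R ⧸ ddIdeal R d e P₂ Q₂)) := by
  exact stmt8_key d e P₁ P₂ Q₁ Q₂ lam₁ mu₁ beta₁ g₂' delta₁ alpha₁ g₁' g₃' hP hQ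
end

section
/- Let k be a field, R a factorial affine k-domain, and B an affine R-domain generated over R by elements x, y, z ∈ B. Suppose that x and z are algebraically independent over R and that x^m·y = F(x,z) in B, where m ≥ 1 and F(X,Z) ∈ R[X,Z] is such that F(0,Z) ∈ R[Z] \ R (i.e., substituting X = 0 in F gives a nonconstant polynomial in Z over R). Then B is isomorphic as an R-algebra to R[X,Y,Z]/(X^m·Y − F(X,Z)). -/
open Polynomial in
private lemma aux_dvd {R B : Type*} [CommRing R] [IsDomain R] [UniqueFactorizationMonoid R]
    [CommRing B] [IsDomain B]
    (φC : MvPolynomial (Fin 2) R →+* B) (hφ : Function.Injective φC)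
    (y : B) (m : ℕ) (F : MvPolynomial (Fin 2) R)
    (hrel : φC (MvPolynomial.X 0) ^ m * y = φC F)
    (hXF : ¬ ((MvPolynomial.X 0 : MvPolynomial (Fin 2) R) ∣ F))
    (p : Polynomial (MvPolynomial (Fin 2) R))
    (hp : Polynomial.eval₂ φC y p = 0) :
    (Polynomial.C (MvPolynomial.X 0 ^ m) * Polynomial.X - Polynomial.C F) ∣ p := by
  classical
  letI : NormalizationMonoid (MvPolynomial (Fin 2) R) :=
    UniqueFactorizationMonoid.normalizationMonoid.toNormalizationMonoid
  letI : NormalizedGCDMonoid (MvPolynomial (Fin 2) R) :=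
    UniqueFactorizationMonoid.toNormalizedGCDMonoid (MvPolynomial (Fin 2) R)
  set c : MvPolynomial (Fin 2) R := MvPolynomial.X 0 ^ m with hc
  set f' : Polynomial (MvPolynomial (Fin 2) R) := Polynomial.C c * Polynomial.X - Polynomial.C F
    with hf'
  have hX0 : (MvPolynomial.X (R := R) (0 : Fin 2)) ≠ 0 := MvPolynomial.X_ne_zero 0
  have hc0 : c ≠ 0 := pow_ne_zero _ hX0
  have hXprime : Prime (MvPolynomial.X (R := R) (0 : Fin 2)) := by
    rw [← MulEquiv.prime_iff (MvPolynomial.finSuccEquiv R 1).toMulEquiv]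
    have h1 : (MvPolynomial.finSuccEquiv R 1).toMulEquiv (MvPolynomial.X 0) = Polynomial.X :=
      MvPolynomial.finSuccEquiv_X_zero
    rw [h1]
    exact Polynomial.prime_X
  have hdeg : f'.degree = 1 := by
    rw [hf', sub_eq_add_neg, ← Polynomial.C_neg]
    exact Polynomial.degree_linear hc0
  have hf'0 : f' ≠ 0 := by
    intro h0
    rw [h0, Polynomial.degree_zero] at hdeg
    exact absurd hdeg (by decide)
  have hcoeff1 : f'.coeff 1 = c := by
    simp [hf', Polynomial.coeff_sub, Polynomial.coeff_C_mul, Polynomial.coeff_C]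
  have hcoeff0 : f'.coeff 0 = -F := by
    simp [hf', Polynomial.coeff_sub, Polynomial.coeff_C_mul]
  -- primitivity
  have hprim : f'.IsPrimitive := by
    intro r hr
    by_contra hru
    have hr0 : r ≠ 0 := by
      rintro rfl
      rw [map_zero] at hr
      exact hf'0 (zero_dvd_iff.mp hr)
    obtain ⟨q, hqirr, hqd⟩ := WfDvdMonoid.exists_irreducible_factor hru hr0
    have hdc : ∀ i, r ∣ f'.coeff i := (Polynomial.C_dvd_iff_dvd_coeff r f').mp hr
    have h1 : r ∣ c := by have := hdc 1; rwa [hcoeff1] at this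
    have h0 : r ∣ F := by
      have := hdc 0; rw [hcoeff0] at this; exact (dvd_neg).mp this
    have hqprime : Prime q := UniqueFactorizationMonoid.irreducible_iff_prime.mp hqirr
    have hqX : q ∣ MvPolynomial.X (R := R) (0 : Fin 2) :=
      hqprime.dvd_of_dvd_pow (hc ▸ hqd.trans h1)
    obtain ⟨s, hs⟩ := hqX
    have hsu : IsUnit s :=
      (hXprime.irreducible.isUnit_or_isUnit hs).resolve_left hqirr.1
    have hX0q : MvPolynomial.X (R := R) (0 : Fin 2) ∣ q := by
      obtain ⟨u, rfl⟩ := hsu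
      exact ⟨(u⁻¹ : _), by rw [hs, mul_assoc, Units.mul_inv, mul_one]⟩
    exact hXF (hX0q.trans (hqd.trans h0))
  -- irreducibility
  have hirr : Irreducible f' := by
    constructor
    · intro hu
      have := Polynomial.degree_eq_zero_of_isUnit hu
      rw [hdeg] at this
      exact absurd this (by decide)
    · intro a b hab
      have ha0 : a ≠ 0 := by rintro rfl; simp at hab; exact hf'0 hab
      have hb0 : b ≠ 0 := by rintro rfl; simp at hab; exact hf'0 hab
      have hnd : a.natDegree + b.natDegree = 1 := by
        have h1 : f'.natDegree = 1 := Polynomial.natDegree_eq_of_degree_eq_some hdeg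
        rw [hab, Polynomial.natDegree_mul ha0 hb0] at h1
        exact h1
      rcases Nat.eq_zero_or_pos a.natDegree with hA | hA
      · left
        have haC : a = Polynomial.C (a.coeff 0) := Polynomial.eq_C_of_natDegree_eq_zero hA
        have : Polynomial.C (a.coeff 0) ∣ f' := ⟨b, by rw [← haC]; exact hab⟩
        rw [haC]
        exact (Polynomial.isUnit_C).mpr (hprim _ this)
      · right
        have hB : b.natDegree = 0 := by omega
        have hbC : b = Polynomial.C (b.coeff 0) := Polynomial.eq_C_of_natDegree_eq_zero hB
        have : Polynomial.C (b.coeff 0) ∣ f' := ⟨a, by rw [← hbC, mul_comm]; exact hab⟩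
        rw [hbC]
        exact (Polynomial.isUnit_C).mpr (hprim _ this)
  have hfprime : Prime f' := UniqueFactorizationMonoid.irreducible_iff_prime.mp hirr
  by_cases hp0 : p = 0
  · simp [hp0]
  -- fraction fields
  set K := FractionRing (MvPolynomial (Fin 2) R)
  set L := FractionRing B
  set g : MvPolynomial (Fin 2) R →+* L := (algebraMap B L).comp φC with hgdef
  have hginj : Function.Injective g := (IsFractionRing.injective B L).comp hφ
  set ℓ : K →+* L := IsFractionRing.lift hginj with hldef
  set cK : K := algebraMap (MvPolynomial (Fin 2) R) K c with hcKdef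
  set FK : K := algebraMap (MvPolynomial (Fin 2) R) K F with hFKdef
  have hcK : cK ≠ 0 := fun h =>
    hc0 (IsFractionRing.injective (MvPolynomial (Fin 2) R) K (by rw [map_zero]; exact h))
  set α : K := FK / cK with hαdef
  have hgc : g c ≠ 0 := fun h => hc0 (hginj (by rw [h, map_zero]))
  have hyL : (algebraMap B L) y = g F / g c := by
    rw [eq_div_iff hgc, hgdef]
    simp only [RingHom.comp_apply]
    rw [← map_mul, hc, map_pow, mul_comm, ← hrel]
  have hcomp : ((algebraMap B L).comp (Polynomial.eval₂RingHom φC y)) =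
      ℓ.comp (Polynomial.eval₂RingHom (algebraMap (MvPolynomial (Fin 2) R) K) α) := by
    apply Polynomial.ringHom_ext
    · intro a
      simp only [RingHom.comp_apply, Polynomial.coe_eval₂RingHom, Polynomial.eval₂_C]
      rw [hldef, IsFractionRing.lift_algebraMap]
      rfl
    · simp only [RingHom.comp_apply, Polynomial.coe_eval₂RingHom, Polynomial.eval₂_X]
      rw [hαdef, map_div₀, hldef, hcKdef, hFKdef, IsFractionRing.lift_algebraMap,
        IsFractionRing.lift_algebraMap, hyL]
  have hev : Polynomial.eval₂ (algebraMap (MvPolynomial (Fin 2) R) K) α p = 0 := by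
    have h2 := RingHom.congr_fun hcomp p
    simp only [RingHom.comp_apply, Polynomial.coe_eval₂RingHom, hp, map_zero] at h2
    have hlinj : Function.Injective ℓ := ℓ.injective
    exact hlinj (by rw [← h2, map_zero])
  have key : (Polynomial.map (algebraMap (MvPolynomial (Fin 2) R) K) p).eval α = 0 := by
    rw [Polynomial.eval_map]; exact hev
  have hroot : (Polynomial.X - Polynomial.C α) ∣
      p.map (algebraMap (MvPolynomial (Fin 2) R) K) :=
    Polynomial.dvd_iff_isRoot.mpr key
  have hca : cK * α = FK := by
    rw [hαdef, mul_div_cancel₀ _ hcK]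
  have hmapf : f'.map (algebraMap (MvPolynomial (Fin 2) R) K) =
      Polynomial.C cK * (Polynomial.X - Polynomial.C α) := by
    rw [hf', Polynomial.map_sub, Polynomial.map_mul, Polynomial.map_C, Polynomial.map_X,
      Polynomial.map_C, mul_sub, ← Polynomial.C_mul, hca]
  have hCcKunit : IsUnit (Polynomial.C cK) :=
    (Polynomial.isUnit_C).mpr (isUnit_iff_ne_zero.mpr hcK)
  have hudvd : f'.map (algebraMap (MvPolynomial (Fin 2) R) K) ∣
      p.map (algebraMap (MvPolynomial (Fin 2) R) K) := by
    rw [hmapf, mul_comm]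
    exact (hCcKunit.mul_right_dvd).mpr hroot
  have hcont : p.content ≠ 0 := fun h => hp0 (Polynomial.content_eq_zero_iff.mp h)
  have hCcontunit : IsUnit (Polynomial.C (algebraMap (MvPolynomial (Fin 2) R) K p.content)) := by
    refine (Polynomial.isUnit_C).mpr (isUnit_iff_ne_zero.mpr ?_)
    exact fun h => hcont (IsFractionRing.injective (MvPolynomial (Fin 2) R) K
      (by rw [h, map_zero]))
  have hppmap : p.map (algebraMap (MvPolynomial (Fin 2) R) K) =
      Polynomial.C (algebraMap (MvPolynomial (Fin 2) R) K p.content) *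
        (p.primPart.map (algebraMap (MvPolynomial (Fin 2) R) K)) := by
    conv_lhs => rw [p.eq_C_content_mul_primPart]
    rw [Polynomial.map_mul, Polynomial.map_C]
  have hdvdpp : f'.map (algebraMap (MvPolynomial (Fin 2) R) K) ∣
      p.primPart.map (algebraMap (MvPolynomial (Fin 2) R) K) := by
    rw [hppmap] at hudvd
    exact (IsUnit.dvd_mul_left hCcontunit).mp hudvd
  have hfin : f' ∣ p.primPart :=
    hprim.dvd_of_fraction_map_dvd_fraction_map hdvdpp
  exact hfin.trans p.primPart_dvd

/-- Let `k` be a field, `R` a factorial affine `k`-domain and `B`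
an affine `R`-domain generated over `R` by elements `x, y, z ∈ B`.  Suppose `x` and `z`
are algebraically independent over `R` and `x^m·y = F(x,z)` in `B`, where `m ≥ 1` and
`F(X,Z) ∈ R[X,Z]` is such that `F(0,Z) ∈ R[Z] \ R` (a nonconstant polynomial in `Z`).
Then `B ≅ R[X,Y,Z]/(X^m·Y − F(X,Z))` as `R`-algebras
(variables of `Fin 3`: `0 = X`, `1 = Y`, `2 = Z`). -/
theorem stmt_11 {k R B : Type*} [Field k] [CommRing R] [IsDomain R] [Algebra k R]
    [Algebra.FiniteType k R] [UniqueFactorizationMonoid R]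
    [CommRing B] [IsDomain B] [Algebra R B]
    (x y z : B) (hgen : Algebra.adjoin R ({x, y, z} : Set B) = ⊤)
    (hind : AlgebraicIndependent R ![x, z])
    (m : ℕ) (hm : 1 ≤ m) (F : MvPolynomial (Fin 2) R)
    (hrel : x ^ m * y = MvPolynomial.aeval ![x, z] F)
    (hF : 1 ≤ (subZeroP F).natDegree) :
    Nonempty (B ≃ₐ[R] (MvPolynomial (Fin 3) R ⧸
      Ideal.span
        ({MvPolynomial.X 0 ^ m * MvPolynomial.X 1 -
          MvPolynomial.rename (![0, 2] : Fin 2 → Fin 3) F} :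
          Set (MvPolynomial (Fin 3) R)))) := by
  classical
  set f : MvPolynomial (Fin 3) R :=
    MvPolynomial.X 0 ^ m * MvPolynomial.X 1 -
      MvPolynomial.rename (![0, 2] : Fin 2 → Fin 3) F with hfdef
  set φ : MvPolynomial (Fin 3) R →ₐ[R] B := MvPolynomial.aeval ![x, y, z] with hφdef
  -- the relation kills f
  have hcompvec : (![x, y, z] ∘ (![0, 2] : Fin 2 → Fin 3)) = ![x, z] := by
    funext i; fin_cases i <;> rfl
  have hφf : φ f = 0 := by
    rw [hfdef, map_sub, map_mul, map_pow, hφdef]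
    rw [MvPolynomial.aeval_rename, hcompvec]
    simp only [MvPolynomial.aeval_X, Matrix.cons_val_zero, Matrix.cons_val_one, Matrix.head_cons]
    rw [← hrel, sub_self]
  -- surjectivity
  have hrange : ∀ b : B, ∃ q, φ q = b := by
    intro b
    have hb : b ∈ Algebra.adjoin R ({x, y, z} : Set B) := by rw [hgen]; trivial
    have hle : Algebra.adjoin R ({x, y, z} : Set B) ≤ φ.range := by
      apply Algebra.adjoin_le
      rintro b hb
      simp only [Set.mem_insert_iff, Set.mem_singleton_iff] at hb
      rcases hb with rfl | rfl | rfl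
      · exact ⟨MvPolynomial.X 0, by simp [hφdef]⟩
      · exact ⟨MvPolynomial.X 1, by simp [hφdef]⟩
      · exact ⟨MvPolynomial.X 2, by simp [hφdef]⟩
    exact hle hb
  -- φC and its injectivity
  set φC : MvPolynomial (Fin 2) R →+* B := (MvPolynomial.aeval ![x, z]).toRingHom with hφCdef
  have hφCinj : Function.Injective φC := by
    rw [algebraicIndependent_iff_injective_aeval] at hind
    exact hind
  -- X0 does not divide F
  have hXF : ¬ ((MvPolynomial.X 0 : MvPolynomial (Fin 2) R) ∣ F) := by
    rintro ⟨t, rfl⟩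
    have : subZeroP (MvPolynomial.X 0 * t) = 0 := by
      rw [subZeroP, map_mul, MvPolynomial.aeval_X]
      simp
    rw [this] at hF
    simp at hF
  -- the equivalence with Polynomial (MvPolynomial (Fin 2) R)
  set e : MvPolynomial (Fin 3) R ≃ₐ[R] Polynomial (MvPolynomial (Fin 2) R) :=
    (MvPolynomial.renameEquiv R (Equiv.swap (0 : Fin 3) 1)).trans (MvPolynomial.finSuccEquiv R 2)
    with hedef
  have hone : ((1 : Fin 3)) = Fin.succ 0 := rfl
  have htwo : ((2 : Fin 3)) = Fin.succ 1 := rfl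
  have he0 : e (MvPolynomial.X 0) = Polynomial.C (MvPolynomial.X 0) := by
    rw [hedef]
    simp only [AlgEquiv.trans_apply, MvPolynomial.renameEquiv_apply, MvPolynomial.rename_X,
      Equiv.swap_apply_left]
    rw [hone, MvPolynomial.finSuccEquiv_X_succ]
  have he1 : e (MvPolynomial.X 1) = Polynomial.X := by
    rw [hedef]
    simp only [AlgEquiv.trans_apply, MvPolynomial.renameEquiv_apply, MvPolynomial.rename_X,
      Equiv.swap_apply_right]
    rw [MvPolynomial.finSuccEquiv_X_zero]
  have he2 : e (MvPolynomial.X 2) = Polynomial.C (MvPolynomial.X 1) := by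
    rw [hedef]
    simp only [AlgEquiv.trans_apply, MvPolynomial.renameEquiv_apply, MvPolynomial.rename_X]
    rw [Equiv.swap_apply_of_ne_of_ne (by decide) (by decide), htwo,
      MvPolynomial.finSuccEquiv_X_succ]
  have heC : ∀ r : R, e (MvPolynomial.C r) = Polynomial.C (MvPolynomial.C r) := by
    intro r
    rw [hedef]
    rw [← MvPolynomial.algebraMap_eq, AlgEquiv.commutes, Polynomial.algebraMap_apply,
      MvPolynomial.algebraMap_eq]
  -- e on the renamed F
  have heF : ∀ q : MvPolynomial (Fin 2) R,
      e (MvPolynomial.rename (![0, 2] : Fin 2 → Fin 3) q) = Polynomial.C q := by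
    intro q
    induction q using MvPolynomial.induction_on with
    | C a => rw [MvPolynomial.rename_C]; exact heC a
    | add p q hp hq => rw [map_add, map_add, hp, hq, map_add]
    | mul_X p i hp =>
      rw [map_mul, map_mul, hp, MvPolynomial.rename_X, map_mul]
      refine congrArg (Polynomial.C p * ·) ?_
      fin_cases i
      · exact he0
      · exact he2

  have hef : e f = Polynomial.C (MvPolynomial.X 0 ^ m) * Polynomial.X - Polynomial.C F := by
    rw [hfdef, map_sub, map_mul, map_pow, he0, he1, heF, map_pow]
  -- φ factors through e and eval₂
  have heval : ∀ q : MvPolynomial (Fin 3) R, Polynomial.eval₂ φC y (e q) = φ q := by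
    have hhom : (Polynomial.eval₂RingHom φC y).comp
        (e : MvPolynomial (Fin 3) R →+* Polynomial (MvPolynomial (Fin 2) R)) =
        (φ : MvPolynomial (Fin 3) R →+* B) := by
      apply MvPolynomial.ringHom_ext
      · intro r
        simp only [RingHom.comp_apply, RingHom.coe_coe, Polynomial.coe_eval₂RingHom]
        rw [heC, Polynomial.eval₂_C, hφCdef, hφdef]
        simp
      · intro i
        simp only [RingHom.comp_apply, RingHom.coe_coe, Polynomial.coe_eval₂RingHom]
        fin_cases i
        · show Polynomial.eval₂ φC y (e (MvPolynomial.X 0)) = φ (MvPolynomial.X 0)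
          rw [he0, Polynomial.eval₂_C, hφCdef, hφdef]; simp
        · show Polynomial.eval₂ φC y (e (MvPolynomial.X 1)) = φ (MvPolynomial.X 1)
          rw [he1, Polynomial.eval₂_X, hφdef]; simp
        · show Polynomial.eval₂ φC y (e (MvPolynomial.X 2)) = φ (MvPolynomial.X 2)
          rw [he2, Polynomial.eval₂_C, hφCdef, hφdef]; simp
    intro q
    exact RingHom.congr_fun hhom q
  -- kernel characterization
  have key : ∀ q : MvPolynomial (Fin 3) R, φ q = 0 → f ∣ q := by
    intro q hq
    have hrel' : φC (MvPolynomial.X 0) ^ m * y = φC F := by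
      have h1 : φC (MvPolynomial.X 0) = x := by rw [hφCdef]; simp
      have h2 : φC F = MvPolynomial.aeval ![x, z] F := by rw [hφCdef]; rfl
      rw [h1, h2]; exact hrel
    have hdvd : (Polynomial.C (MvPolynomial.X 0 ^ m) * Polynomial.X - Polynomial.C F) ∣ e q :=
      aux_dvd φC hφCinj y m F hrel' hXF (e q) (by rw [heval q, hq])
    obtain ⟨t, ht⟩ := hdvd
    rw [← hef] at ht
    refine ⟨e.symm t, ?_⟩
    have := congrArg e.symm ht
    rwa [AlgEquiv.symm_apply_apply, map_mul, AlgEquiv.symm_apply_apply] at this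
  -- build the algebra map from the quotient
  set I : Ideal (MvPolynomial (Fin 3) R) := Ideal.span {f} with hIdef
  have hIker : ∀ a ∈ I, φ a = 0 := by
    intro a ha
    rw [hIdef, Ideal.mem_span_singleton] at ha
    obtain ⟨t, rfl⟩ := ha
    rw [map_mul, hφf, zero_mul]
  set ψ : (MvPolynomial (Fin 3) R ⧸ I) →ₐ[R] B := Ideal.Quotient.liftₐ I φ hIker with hψdef
  have hψmk : ∀ q : MvPolynomial (Fin 3) R, ψ (Ideal.Quotient.mk I q) = φ q := by
    intro q
    rw [hψdef]
    exact Ideal.Quotient.liftₐ_apply I φ hIker (Ideal.Quotient.mk I q) ▸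
      Ideal.Quotient.lift_mk I _ _
  have hinj : Function.Injective ψ := by
    rw [injective_iff_map_eq_zero]
    intro a ha
    obtain ⟨q, rfl⟩ := Ideal.Quotient.mk_surjective a
    rw [hψmk] at ha
    rw [Ideal.Quotient.eq_zero_iff_mem, hIdef, Ideal.mem_span_singleton]
    exact key q ha
  have hsurj : Function.Surjective ψ := by
    intro b
    obtain ⟨q, hq⟩ := hrange b
    exact ⟨Ideal.Quotient.mk I q, by rw [hψmk, hq]⟩
  exact ⟨(AlgEquiv.ofBijective ψ ⟨hinj, hsurj⟩).symm⟩
end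

section
/- Let k be a field of characteristic zero, R a factorial affine k-domain, and B a factorial affine R-domain. Suppose there exists a non-trivial locally nilpotent k-derivation D on B such that: (i) ker D = R[x], the R-subalgebra generated by an element x ∈ B that is transcendental over R; and (ii) there exists z ∈ B \ xB with D(z) = x^m for some integer m ≥ 1. If B ≠ R[x,z], then R[z] ∩ xB = φ(z)·R[z], where φ(z) is an irreducible element of the polynomial ring R[z] with deg_z φ(z) ≥ 1. -/
open Polynomial Finset

section IterLeibniz

variable {k B : Type*} [Field k] [CommRing B] [Algebra k B]

theorem derivation_iterate_mul (D : Derivation k B B) (p q : B) (n : ℕ) :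
    (⇑D)^[n] (p * q) =
      ∑ i ∈ range (n + 1), n.choose i • ((⇑D)^[n - i] p * (⇑D)^[i] q) := by
  have L : ∀ a b : B, D (a * b) = D a * b + a * D b := fun a b => by
    rw [Derivation.leibniz, smul_eq_mul, smul_eq_mul]; ring
  induction n with
  | zero => simp
  | succ n IH =>
    calc
      (⇑D)^[n + 1] (p * q) =
          D (∑ k ∈ range (n + 1), n.choose k • ((⇑D)^[n - k] p * (⇑D)^[k] q)) := by
        rw [Function.iterate_succ_apply', IH]
      _ = (∑ k ∈ range (n + 1),
            n.choose k • ((⇑D)^[n - k + 1] p * (⇑D)^[k] q)) +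
          ∑ k ∈ range (n + 1),
            n.choose k • ((⇑D)^[n - k] p * (⇑D)^[k + 1] q) := by
        rw [map_sum]
        simp_rw [map_nsmul, L, smul_add, sum_add_distrib, Function.iterate_succ_apply']
      _ = (∑ k ∈ range (n + 1),
                n.choose k.succ • ((⇑D)^[n - k] p * (⇑D)^[k + 1] q)) +
              1 • ((⇑D)^[n + 1] p * (⇑D)^[0] q) +
            ∑ k ∈ range (n + 1), n.choose k • ((⇑D)^[n - k] p * (⇑D)^[k + 1] q) :=
        ?_
      _ = ((∑ k ∈ range (n + 1), n.choose k • ((⇑D)^[n - k] p * (⇑D)^[k + 1] q)) +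
              ∑ k ∈ range (n + 1),
                n.choose k.succ • ((⇑D)^[n - k] p * (⇑D)^[k + 1] q)) +
            1 • ((⇑D)^[n + 1] p * (⇑D)^[0] q) := by
        rw [add_comm, add_assoc]
      _ = (∑ i ∈ range (n + 1),
              (n + 1).choose (i + 1) • ((⇑D)^[n + 1 - (i + 1)] p * (⇑D)^[i + 1] q)) +
            1 • ((⇑D)^[n + 1] p * (⇑D)^[0] q) := by
        simp_rw [Nat.choose_succ_succ, Nat.succ_sub_succ, add_smul, sum_add_distrib]
      _ = ∑ i ∈ range (n + 2),
            (n + 1).choose i • ((⇑D)^[n + 1 - i] p * (⇑D)^[i] q) := by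
        rw [sum_range_succ' _ (n + 1), Nat.choose_zero_right, tsub_zero]
    congr
    refine (sum_range_succ' _ _).trans (congr_arg₂ (· + ·) ?_ ?_)
    · rw [sum_range_succ, Nat.choose_succ_self, zero_smul, add_zero]
      refine Finset.sum_congr rfl fun i hi => ?_
      rw [mem_range] at hi
      congr
      omega
    · rw [Nat.choose_zero_right, tsub_zero]

end IterLeibniz

section FC

variable {k B : Type*} [Field k] [CharZero k] [CommRing B] [IsDomain B] [Algebra k B]

theorem derivation_iterate_zero_apply (D : Derivation k B B) (n : ℕ) : (⇑D)^[n] 0 = 0 := by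
  induction n with
  | zero => rfl
  | succ n IH => rw [Function.iterate_succ_apply, map_zero, IH]

theorem derivation_iterate_stable (D : Derivation k B B) {b : B} {n : ℕ}
    (h : (⇑D)^[n] b = 0) {j : ℕ} (hj : n ≤ j) : (⇑D)^[j] b = 0 := by
  obtain ⟨i, rfl⟩ := Nat.exists_eq_add_of_le hj
  rw [add_comm, Function.iterate_add_apply, h, derivation_iterate_zero_apply]

/-- the kernel of a locally nilpotent derivation is factorially closed. -/
theorem derivation_fc (D : Derivation k B B)
    (hln : ∀ b : B, ∃ n : ℕ, (⇑D)^[n] b = 0)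
    {a b : B} (ha : a ≠ 0) (hb : b ≠ 0) (hab : D (a * b) = 0) : D a = 0 := by
  classical
  haveI : CharZero B := charZero_of_injective_algebraMap (algebraMap k B).injective
  by_contra hDa
  -- minimal indices
  have hfa := Nat.find_spec (hln a)
  have hfb := Nat.find_spec (hln b)
  set na := Nat.find (hln a) with hna
  set nb := Nat.find (hln b) with hnb
  have hna2 : 2 ≤ na := by
    rcases Nat.lt_or_ge na 2 with h | h
    · interval_cases na
      · exact absurd hfa ha
      · exact absurd hfa hDa
    · exact h
  have hnb1 : 1 ≤ nb := by
    rcases Nat.eq_zero_or_pos nb with h | h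
    · rw [h] at hfb; exact absurd hfb hb
    · exact h
  set p := na - 1 with hp
  set q := nb - 1 with hq
  have hpa : (⇑D)^[p] a ≠ 0 := Nat.find_min (hln a) (by omega)
  have hqb : (⇑D)^[q] b ≠ 0 := Nat.find_min (hln b) (by omega)
  have hpa' : ∀ j, p < j → (⇑D)^[j] a = 0 := fun j hj =>
    derivation_iterate_stable D hfa (by omega)
  have hqb' : ∀ j, q < j → (⇑D)^[j] b = 0 := fun j hj =>
    derivation_iterate_stable D hfb (by omega)
  have hzero : (⇑D)^[p + q] (a * b) = 0 := by
    have hpq : 1 ≤ p + q := by omega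
    obtain ⟨s, hs⟩ := Nat.exists_eq_add_of_le hpq
    rw [hs, add_comm 1 s, Function.iterate_add_apply]
    simp only [Function.iterate_one, hab, derivation_iterate_zero_apply]
  rw [derivation_iterate_mul] at hzero
  rw [Finset.sum_eq_single q (fun i hi hne => ?_) (fun h => absurd (Finset.mem_range.2 (by omega)) h)]
    at hzero
  · have h1 : ((p + q).choose q : B) ≠ 0 := by
      exact_mod_cast Nat.cast_ne_zero.2 (Nat.choose_pos (by omega)).ne'
    rw [Nat.add_sub_cancel] at hzero
    rw [nsmul_eq_mul] at hzero
    exact (mul_ne_zero h1 (mul_ne_zero hpa hqb)) hzero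
  · rcases Nat.lt_or_ge i q with h | h
    · rw [hpa' (p + q - i) (by rw [Finset.mem_range] at hi; omega), zero_mul, smul_zero]
    · rw [hqb' i (by omega), mul_zero, smul_zero]

end FC

open Polynomial Finset

/-- Let `k` be a field of characteristic zero, `R` a factorial
affine `k`-domain, and `B` a factorial affine `R`-domain.  Suppose there is a
non-trivial locally nilpotent `k`-derivation `D` on `B` such that (i) `ker D = R[x]`
for some `x ∈ B` transcendental over `R`, and (ii) there is `z ∈ B \ xB` with
`D(z) = x^m` for some `m ≥ 1`.  If `B ≠ R[x,z]`, then `R[z] ∩ xB = φ(z)·R[z]` where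
`φ` is an irreducible element of the polynomial ring `R[z]` with `deg_z φ ≥ 1`
(here `R[z] ∩ xB` is described, via the identification of `R[z]` with the polynomial
ring over `R`, as the set of `p` with `p(z) ∈ xB`). -/
theorem stmt_13 {k R B : Type*} [Field k] [CharZero k]
    [CommRing R] [IsDomain R] [Algebra k R] [Algebra.FiniteType k R]
    [UniqueFactorizationMonoid R]
    [CommRing B] [IsDomain B] [Algebra k B] [Algebra R B] [IsScalarTower k R B]
    [Algebra.FiniteType R B] [UniqueFactorizationMonoid B]
    (D : Derivation k B B) (hD0 : D ≠ 0)
    (hln : ∀ b : B, ∃ n : ℕ, (⇑D)^[n] b = 0)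
    (x : B) (hx : Transcendental R x)
    (hker : ∀ b : B, D b = 0 ↔ b ∈ Algebra.adjoin R ({x} : Set B))
    (z : B) (hz : z ∉ Ideal.span ({x} : Set B))
    (m : ℕ) (hm : 1 ≤ m) (hDz : D z = x ^ m)
    (hne : Algebra.adjoin R ({x, z} : Set B) ≠ ⊤) :
    ∃ φ : Polynomial R, Irreducible φ ∧ 1 ≤ φ.natDegree ∧
      ∀ p : Polynomial R,
        Polynomial.aeval z p ∈ Ideal.span ({x} : Set B) ↔ φ ∣ p := by
  classical
  haveI : CharZero B := charZero_of_injective_algebraMap (R := k) (A := B) (algebraMap k B).injective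
  have hinj : Function.Injective (aeval x : R[X] →ₐ[R] B) :=
    transcendental_iff_injective.mp hx
  have hx0 : x ≠ 0 := by
    intro h
    exact X_ne_zero (R := R) (hinj (by simp [h]))
  have hmem : ∀ b : B, D b = 0 → ∃ f : R[X], aeval x f = b := by
    intro b h
    rw [hker, Algebra.adjoin_singleton_eq_range_aeval] at h
    exact h
  have hkx : ∀ f : R[X], D (aeval x f) = 0 := fun f =>
    (hker _).mpr (by rw [Algebra.adjoin_singleton_eq_range_aeval]; exact ⟨f, rfl⟩)
  have hDx : D x = 0 := (hker x).mpr (Algebra.self_mem_adjoin_singleton R x)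
  have fc : ∀ a b : B, a ≠ 0 → b ≠ 0 → D (a * b) = 0 → D a = 0 ∧ D b = 0 :=
    fun a b ha hb h =>
      ⟨derivation_fc D hln ha hb h, derivation_fc D hln hb ha (by rwa [mul_comm])⟩
  -- `x` is a prime element of `B`
  have hxu : ¬IsUnit x := by
    intro h
    obtain ⟨u, hu⟩ := h
    have h1 : x * ↑u⁻¹ = 1 := by rw [← hu]; exact u.mul_inv
    have hD1 : D (x * ↑u⁻¹) = 0 := by rw [h1]; exact D.map_one_eq_zero
    obtain ⟨f, hf⟩ := hmem _ (fc x _ hx0 (u⁻¹).ne_zero hD1).2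
    have h2 : aeval x ((X : R[X]) * f) = aeval x (1 : R[X]) := by
      rw [map_mul, aeval_X, hf, h1, map_one]
    exact not_isUnit_X (R := R) (IsUnit.of_mul_eq_one _ (hinj h2))
  have hxirr : Irreducible x := by
    refine ⟨hxu, fun a b hab => ?_⟩
    have ha0 : a ≠ 0 := by rintro rfl; rw [zero_mul] at hab; exact hx0 hab
    have hb0 : b ≠ 0 := by rintro rfl; rw [mul_zero] at hab; exact hx0 hab
    have hDab : D (a * b) = 0 := by rw [← hab]; exact hDx
    obtain ⟨hDa, hDb⟩ := fc a b ha0 hb0 hDab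
    obtain ⟨f, hf⟩ := hmem a hDa
    obtain ⟨g, hg⟩ := hmem b hDb
    have h2 : aeval x (X : R[X]) = aeval x (f * g) := by rw [aeval_X, map_mul, hf, hg, hab]
    have h3 : (X : R[X]) = f * g := hinj h2
    rcases (irreducible_X (R := R)).isUnit_or_isUnit h3 with h | h
    · exact Or.inl (by rw [← hf]; exact h.map (aeval x))
    · exact Or.inr (by rw [← hg]; exact h.map (aeval x))
  have hxprime : Prime x := hxirr.prime
  have hspan : (Ideal.span ({x} : Set B)).IsPrime :=
    (Ideal.span_singleton_prime hx0).mpr hxprime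
  -- Step B : constants are not in xB
  have hRB : Function.Injective (algebraMap R B) := by
    intro r s h
    have h2 : aeval x (C r) = aeval x (C s) := by rw [aeval_C, aeval_C, h]
    exact C_inj.mp (hinj h2)
  have hDalg : ∀ r : R, D (algebraMap R B r) = 0 := fun r =>
    (hker _).mpr (Subalgebra.algebraMap_mem _ r)
  have hconst : ∀ r : R, algebraMap R B r ∈ Ideal.span ({x} : Set B) → r = 0 := by
    intro r hr
    by_contra hr0
    obtain ⟨b, hb⟩ := Ideal.mem_span_singleton'.mp hr
    have hrB : algebraMap R B r ≠ 0 := fun h => hr0 (hRB (by rw [h, map_zero]))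
    have hb0 : b ≠ 0 := by rintro rfl; rw [zero_mul] at hb; exact hrB hb.symm
    have hDr : D (b * x) = 0 := by
      rw [show b * x = algebraMap R B r from hb]
      exact hDalg r
    obtain ⟨g, hg⟩ := hmem b (fc b x hb0 hx0 hDr).1
    have h2 : aeval x (C r) = aeval x (g * X) := by
      rw [aeval_C, map_mul, aeval_X, hg, hb]
    have h3 : (C r : R[X]) = g * X := hinj h2
    apply hr0
    have := congrArg (fun q => Polynomial.coeff q 0) h3
    simpa using this
  have hDker : ∀ u v : B, D u = 0 → D (u * v) = u * D v := by
    intro u v h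
    rw [Derivation.leibniz, h, smul_zero, add_zero, smul_eq_mul]
  have hDxpow : ∀ n : ℕ, D (x ^ n) = 0 := fun n =>
    (hker _).mpr (pow_mem (Algebra.self_mem_adjoin_singleton R x) n)
  -- Step C : the contracted ideal is nonzero
  have hI : ∃ q : R[X], q ≠ 0 ∧ aeval z q ∈ Ideal.span ({x} : Set B) := by
    by_contra hcon
    push_neg at hcon
    have hI0 : ∀ q : R[X], aeval z q ∈ Ideal.span ({x} : Set B) → q = 0 := by
      intro q hq
      by_contra h0
      exact hcon q h0 hq
    set ev : Polynomial (Polynomial R) →ₐ[R] B := aevalTower (aeval x) z with hev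
    have hev_mon : ∀ (n : ℕ) (f : R[X]), ev (monomial n f) = aeval x f * z ^ n := by
      intro n f
      rw [← C_mul_X_pow_eq_monomial, map_mul, map_pow, aevalTower_C, aevalTower_X]
    have hrange : ∀ t, ev t ∈ Algebra.adjoin R ({x, z} : Set B) := by
      intro t
      induction t using Polynomial.induction_on' with
      | add p q hp hq => rw [map_add]; exact add_mem hp hq
      | monomial n f =>
        rw [hev_mon]
        refine mul_mem ?_ (pow_mem (Algebra.subset_adjoin (by simp)) n)
        have hmem2 : aeval x f ∈ Algebra.adjoin R ({x} : Set B) := by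
          rw [Algebra.adjoin_singleton_eq_range_aeval]; exact ⟨f, rfl⟩
        exact Algebra.adjoin_mono (Set.singleton_subset_iff.mpr (Set.mem_insert x {z})) hmem2
    have hanti : ∀ t, ∃ t', D (ev t') = x ^ m * ev t := by
      intro t
      induction t using Polynomial.induction_on' with
      | add p q hp hq =>
        obtain ⟨p', hp'⟩ := hp; obtain ⟨q', hq'⟩ := hq
        exact ⟨p' + q', by simp only [map_add, hp', hq', mul_add]⟩
      | monomial n f =>
        refine ⟨monomial (n + 1) ((algebraMap k R (((n + 1 : ℕ) : k)⁻¹)) • f), ?_⟩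
        have hc : algebraMap R B (algebraMap k R (((n + 1 : ℕ) : k)⁻¹)) * ((n + 1 : ℕ) : B)
            = 1 := by
          rw [← IsScalarTower.algebraMap_apply k R B, ← map_natCast (algebraMap k B) (n + 1),
            ← map_mul, inv_mul_cancel₀ (by exact_mod_cast Nat.succ_ne_zero n), map_one]
        have hDzpow : D (z ^ (n + 1)) = ((n + 1 : ℕ) : B) * (z ^ n * x ^ m) := by
          rw [Derivation.leibniz_pow, hDz, Nat.add_sub_cancel, smul_eq_mul, nsmul_eq_mul]
        rw [hev_mon, hev_mon, hDker _ _ (hkx _), hDzpow, map_smul, Algebra.smul_def,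
          show algebraMap R B (algebraMap k R (((n + 1 : ℕ) : k)⁻¹)) * aeval x f *
              (((n + 1 : ℕ) : B) * (z ^ n * x ^ m)) =
            algebraMap R B (algebraMap k R (((n + 1 : ℕ) : k)⁻¹)) * ((n + 1 : ℕ) : B) *
              (aeval x f * z ^ n * x ^ m) from by ring, hc, one_mul]
        ring
    have claim1 : ∀ (n : ℕ) (b : B), (⇑D)^[n] b = 0 →
        ∃ (N : ℕ) (t : Polynomial (Polynomial R)), ev t = x ^ N * b := by
      intro n
      induction n with
      | zero =>
        intro b hb
        rw [Function.iterate_zero_apply] at hb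
        exact ⟨0, 0, by simp [hb]⟩
      | succ n IH =>
        intro b hb
        have hc : (⇑D)^[n] (D b) = 0 := by rw [← Function.iterate_succ_apply]; exact hb
        obtain ⟨N, t, ht⟩ := IH (D b) hc
        obtain ⟨t', ht'⟩ := hanti t
        have hkey : D (x ^ (m + N) * b - ev t') = 0 := by
          rw [map_sub, hDker _ _ (hDxpow (m + N)), ht', ht, pow_add]
          ring
        obtain ⟨g, hg⟩ := hmem _ hkey
        refine ⟨m + N, t' + C g, ?_⟩
        rw [map_add, aevalTower_C, hg]
        ring
    have claim2 : ∀ (N : ℕ) (b : B), (∃ t, ev t = x ^ N * b) → ∃ t, ev t = b := by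
      intro N
      induction N with
      | zero =>
        rintro b ⟨t, ht⟩
        exact ⟨t, by rw [ht, pow_zero, one_mul]⟩
      | succ N IH =>
        rintro b ⟨t, ht⟩
        have hspanmem : ev t ∈ Ideal.span ({x} : Set B) := by
          rw [ht]
          exact Ideal.mem_span_singleton'.mpr ⟨x ^ N * b, by rw [pow_succ]; ring⟩
        have hdiff : ∀ s : Polynomial (Polynomial R),
            ev s - aeval z (s.map (evalRingHom (0 : R))) ∈ Ideal.span ({x} : Set B) := by
          intro s
          induction s using Polynomial.induction_on' with
          | add p q hp hq =>
            rw [map_add, Polynomial.map_add, map_add]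
            convert add_mem hp hq using 1
            ring
          | monomial n f =>
            rw [hev_mon, Polynomial.map_monomial, aeval_monomial, coe_evalRingHom]
            have hXdvd : (X : R[X]) ∣ f - C (f.eval 0) :=
              X_dvd_iff.mpr (by rw [coeff_sub, coeff_C_zero, coeff_zero_eq_eval_zero, sub_self])
            obtain ⟨e, he⟩ := hXdvd
            have h2 : aeval x f - algebraMap R B (f.eval 0) = x * aeval x e := by
              have h3 := congrArg (aeval x : R[X] →ₐ[R] B) he
              rw [map_sub, aeval_C, map_mul, aeval_X] at h3
              exact h3
            refine Ideal.mem_span_singleton'.mpr ⟨aeval x e * z ^ n, ?_⟩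
            rw [show (aeval x) f * z ^ n - (algebraMap R B) (eval 0 f) * z ^ n
                = ((aeval x) f - (algebraMap R B) (eval 0 f)) * z ^ n from by ring, h2]
            ring
        set p0 : R[X] := t.map (evalRingHom (0 : R)) with hp0def
        have hp0mem : aeval z p0 ∈ Ideal.span ({x} : Set B) := by
          have h4 := hdiff t
          have h2 : aeval z p0 = ev t - (ev t - aeval z p0) := by ring
          rw [h2]
          exact Ideal.sub_mem _ hspanmem h4
        have hp00 : p0 = 0 := hI0 _ hp0mem
        have hcoeff : ∀ j, (t.coeff j).eval 0 = 0 := by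
          intro j
          have h5 := congrArg (fun q : R[X] => q.coeff j) hp00
          simpa [hp0def, coeff_map] using h5
        set u : Polynomial (Polynomial R) := t.sum (fun j f => C f.divX * X ^ j) with hu
        have htu : C (X : R[X]) * u = t := by
          rw [hu, Polynomial.sum_def, Finset.mul_sum]
          have h6 : ∀ j ∈ t.support,
              C (X : R[X]) * (C (t.coeff j).divX * X ^ j) = C (t.coeff j) * X ^ j := by
            intro j _
            rw [← mul_assoc, ← C_mul]
            congr 2
            have h0 : (t.coeff j).coeff 0 = 0 := by
              rw [coeff_zero_eq_eval_zero]; exact hcoeff j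
            have h7 := X_mul_divX_add (t.coeff j)
            rwa [h0, C_0, add_zero] at h7
          rw [Finset.sum_congr rfl h6]
          conv_rhs => rw [← sum_C_mul_X_pow_eq t]
          rw [Polynomial.sum_def]
        have hevu : x * ev u = x ^ (N + 1) * b := by
          have h8 : ev (C (X : R[X]) * u) = ev t := by rw [htu]
          rw [map_mul, aevalTower_C, aeval_X] at h8
          rw [h8, ht]
        have hxn : ev u = x ^ N * b := by
          apply mul_left_cancel₀ hx0
          rw [hevu, pow_succ]
          ring
        exact IH b ⟨u, hxn⟩
    apply hne
    refine (Algebra.eq_top_iff).mpr fun b => ?_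
    obtain ⟨n, hn⟩ := hln b
    obtain ⟨N, t, ht⟩ := claim1 n b hn
    obtain ⟨t2, ht2⟩ := claim2 N b ⟨t, ht⟩
    rw [← ht2]
    exact hrange t2
  -- Step D : assemble
  letI : NormalizationMonoid R := UniqueFactorizationMonoid.normalizationMonoid.toNormalizationMonoid
  letI : NormalizedGCDMonoid R := UniqueFactorizationMonoid.toNormalizedGCDMonoid R
  obtain ⟨q0, hq00, hq0mem⟩ := hI
  obtain ⟨fs, hfsprime, hassoc⟩ := UniqueFactorizationMonoid.exists_prime_factors q0 hq00
  obtain ⟨w, hw⟩ := hassoc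
  have hprodmem : aeval z fs.prod ∈ Ideal.span ({x} : Set B) := by
    have h1 : aeval z q0 = aeval z fs.prod * aeval z (w : R[X]) := by
      rw [← map_mul, hw]
    have hwunit : IsUnit (aeval z (w : R[X])) := w.isUnit.map (aeval z)
    rcases hspan.mem_or_mem (h1 ▸ hq0mem) with h | h
    · exact h
    · exact absurd (Ideal.eq_top_of_isUnit_mem _ h hwunit) hspan.ne_top
  have h3 : ∃ π ∈ fs, aeval z π ∈ Ideal.span ({x} : Set B) := by
    have h4 : (fs.map (fun g : R[X] => aeval z g)).prod ∈ Ideal.span ({x} : Set B) := by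
      rw [← map_multiset_prod]
      exact hprodmem
    obtain ⟨y, hy, hys⟩ := (hspan.multiset_prod_mem_iff_exists_mem _).mp h4
    obtain ⟨π, hπ, rfl⟩ := Multiset.mem_map.mp hy
    exact ⟨π, hπ, hys⟩
  obtain ⟨π, hπfs, hπmem⟩ := h3
  have hπprime : Prime π := hfsprime π hπfs
  have hπirr : Irreducible π := hπprime.irreducible
  have hπdeg : 1 ≤ π.natDegree := by
    by_contra hdeg
    push_neg at hdeg
    obtain ⟨c, hc⟩ := natDegree_eq_zero.mp (Nat.lt_one_iff.mp hdeg)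
    have hcmem : algebraMap R B c ∈ Ideal.span ({x} : Set B) := by
      rw [← aeval_C z c, hc]
      exact hπmem
    have hc0 : c = 0 := hconst c hcmem
    rw [hc0, map_zero] at hc
    exact hπprime.ne_zero hc.symm
  have hπprim : π.IsPrimitive := by
    intro c hdvd
    obtain ⟨w2, hw2⟩ := hdvd
    rcases hπirr.isUnit_or_isUnit hw2 with h | h
    · exact isUnit_C.mp h
    · exfalso
      have h5 : π.natDegree ≤ 0 := by
        rw [hw2]
        have := natDegree_mul_le (p := C c) (q := w2)
        rwa [natDegree_C, natDegree_eq_zero_of_isUnit h, zero_add] at this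
      omega
  set K := FractionRing R
  have hπKirr : Irreducible (π.map (algebraMap R K)) :=
    (hπprim.irreducible_iff_irreducible_map_fraction_map (K := K)).mp hπirr
  have hmapinj : Function.Injective (Polynomial.map (algebraMap R K)) :=
    Polynomial.map_injective _ (IsFractionRing.injective R K)
  refine ⟨π, hπirr, hπdeg, fun p => ⟨fun hp => ?_, fun hp => ?_⟩⟩
  · by_cases hp0 : p = 0
    · rw [hp0]; exact dvd_zero π
    have hdvdK : π.map (algebraMap R K) ∣ p.map (algebraMap R K) := by
      by_contra hnd
      obtain ⟨a, b, hab⟩ := hπKirr.coprime_iff_not_dvd.mpr hnd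
      obtain ⟨da, hda⟩ := IsLocalization.integerNormalization_map_to_map (nonZeroDivisors R) a
      obtain ⟨db, hdb⟩ := IsLocalization.integerNormalization_map_to_map (nonZeroDivisors R) b
      set A' := IsLocalization.integerNormalization (nonZeroDivisors R) a with hA'
      set B' := IsLocalization.integerNormalization (nonZeroDivisors R) b with hB'
      have hsm : ∀ (d : R) (g : Polynomial K), d • g = C (algebraMap R K d) * g := by
        intro d g
        rw [← algebraMap_smul K d g, Polynomial.smul_eq_C_mul]
      have heq : C (db : R) * A' * π + C (da : R) * B' * p = C ((da : R) * (db : R)) := by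
        apply hmapinj
        rw [Polynomial.map_add, Polynomial.map_mul, Polynomial.map_mul, Polynomial.map_mul,
          Polynomial.map_mul, Polynomial.map_C, Polynomial.map_C, Polynomial.map_C, hda, hdb,
          hsm, hsm, map_mul, C_mul]
        linear_combination (C (algebraMap R K (da : R)) * C (algebraMap R K (db : R))) * hab
      have hfinal : algebraMap R B ((da : R) * (db : R)) ∈ Ideal.span ({x} : Set B) := by
        have h9 := congrArg (aeval z : R[X] →ₐ[R] B) heq
        simp only [map_add, map_mul, aeval_C] at h9
        rw [map_mul, ← h9]
        exact Ideal.add_mem _ (Ideal.mul_mem_left _ _ hπmem) (Ideal.mul_mem_left _ _ hp)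
      have h10 := hconst _ hfinal
      exact mul_ne_zero (nonZeroDivisors.coe_ne_zero da) (nonZeroDivisors.coe_ne_zero db) h10
    have hcontent0 : algebraMap R K p.content ≠ 0 := fun h =>
      hp0 (content_eq_zero_iff.mp ((injective_iff_map_eq_zero _).mp
        (IsFractionRing.injective R K) _ h))
    obtain ⟨v, hv⟩ := isUnit_C.mpr (isUnit_iff_ne_zero.mpr hcontent0)
    have hppK : π.map (algebraMap R K) ∣ p.primPart.map (algebraMap R K) := by
      have h11 : p.map (algebraMap R K) =
          ↑v * p.primPart.map (algebraMap R K) := by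
        conv_lhs => rw [p.eq_C_content_mul_primPart]
        rw [Polynomial.map_mul, Polynomial.map_C, hv]
      rw [h11] at hdvdK
      exact (Units.dvd_mul_left).mp hdvdK
    have hπpp : π ∣ p.primPart :=
      hπprim.dvd_of_fraction_map_dvd_fraction_map (K := K) hppK
    exact hπpp.trans p.primPart_dvd
  · obtain ⟨e, rfl⟩ := hp
    rw [map_mul]
    exact Ideal.mul_mem_right _ _ hπmem
end

section
/- Let R be an integral domain, B an integral domain containing R as a subring, n ≥ 2 an integer, and a, b₁, …, b_n ∈ B \ R with a ≠ 0. Assume: (i) B is contained in the subring R[a, a⁻¹, b₁, …, b_n] of Frac(B); (ii) b₁, …, b_{n−1} are algebraically independent over R, so S := R[b₁,…,b_{n−1}] is a polynomial ring in n−1 variables over R, and there exist polynomials φ_i ∈ R[T₁,…,T_i] for 1 ≤ i ≤ n−1 such that S ∩ aB = (φ₁(b₁), φ₂(b₁,b₂), …, φ_{n−1}(b₁,…,b_{n−1}))·S, and for each i there exist an integer l_i > 0 and a polynomial g_i in i+2 variables over R with φ_i(b₁,…,b_i) = a^{l_i}·g_i(a, b₁, …, b_{i+1}) in B; and (iii)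 the image of b_n in B/aB is transcendental over the R-subalgebra of B/aB generated by the images of b₁, …, b_{n−1}. Then B = R[a, b₁, …, b_n], i.e., B is generated as an R-algebra by a, b₁, …, b_n. -/
set_option maxHeartbeats 1000000
set_option synthInstance.maxHeartbeats 400000

open MvPolynomial

private lemma aux_aeval_mem {R B : Type*} [CommSemiring R] [CommSemiring B] [Algebra R B]
    (A : Subalgebra R B) {σ : Type*} {v : σ → B} (hv : ∀ i, v i ∈ A)
    (p : MvPolynomial σ R) : MvPolynomial.aeval v p ∈ A := by
  have h : MvPolynomial.aeval v p ∈ Algebra.adjoin R (Set.range v) := by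
    rw [Algebra.adjoin_range_eq_range_aeval]; exact ⟨p, rfl⟩
  exact Algebra.adjoin_le (by rintro x ⟨i, rfl⟩; exact hv i) h

private lemma aux_diff {R B : Type*} [CommRing R] [CommRing B] [Algebra R B]
    (A : Subalgebra R B) (a : B) (ha : a ∈ A) {k : ℕ} (c : Fin k → B)
    (hc : ∀ i, c i ∈ A) (P : MvPolynomial (Fin (k + 1)) R) :
    ∃ q ∈ A, MvPolynomial.aeval (Fin.cons a c) P - MvPolynomial.aeval (Fin.cons 0 c) P
      = a * q := by
  have hmemA : ∀ p : MvPolynomial (Fin (k + 1)) R, MvPolynomial.aeval (Fin.cons a c) p ∈ A := by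
    intro p
    refine aux_aeval_mem A (fun i => ?_) p
    refine Fin.cases ?_ (fun j => ?_) i <;> simp [ha, hc]
  induction P using MvPolynomial.induction_on with
  | C r => exact ⟨0, zero_mem _, by simp⟩
  | add p q hp hq =>
    obtain ⟨q1, h1A, h1⟩ := hp
    obtain ⟨q2, h2A, h2⟩ := hq
    exact ⟨q1 + q2, add_mem h1A h2A, by rw [map_add, map_add, mul_add, ← h1, ← h2]; ring⟩
  | mul_X p i hp =>
    obtain ⟨q1, h1A, h1⟩ := hp
    induction i using Fin.cases with
    | zero =>
      refine ⟨MvPolynomial.aeval (Fin.cons a c) p, hmemA p, ?_⟩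
      simp only [map_mul, aeval_X, Fin.cons_zero, mul_zero, sub_zero]
      ring
    | succ j =>
      refine ⟨q1 * c j, mul_mem h1A (hc j), ?_⟩
      simp only [map_mul, aeval_X, Fin.cons_succ]
      rw [← sub_mul, h1]; ring

private lemma aux_dec {R B : Type*} [CommRing R] [CommRing B] [Algebra R B] {m : ℕ}
    (b : Fin (m + 1) → B) (P : MvPolynomial (Fin (m + 1)) R) :
    MvPolynomial.aeval b P =
      Polynomial.eval₂ (MvPolynomial.aeval (fun i : Fin m => b i.castSucc)).toRingHom
        (b (Fin.last m))
        (MvPolynomial.finSuccEquiv R m (MvPolynomial.rename (finRotate (m + 1)) P)) := by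
  have h : ((Polynomial.eval₂RingHom
        (MvPolynomial.aeval (fun i : Fin m => b i.castSucc)).toRingHom
        (b (Fin.last m))).comp
      (((MvPolynomial.finSuccEquiv R m).toAlgHom.toRingHom).comp
        (MvPolynomial.rename (finRotate (m + 1))).toRingHom))
      = (MvPolynomial.aeval b).toRingHom := by
    apply MvPolynomial.ringHom_ext
    · intro r
      have hc : MvPolynomial.finSuccEquiv R m (C r) = Polynomial.C (C r) := by
        simp [finSuccEquiv_apply]
      simp [hc]
    · intro i
      induction i using Fin.lastCases with
      | last =>
        simp [finRotate_last, finSuccEquiv_X_zero]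
      | cast j =>
        simp [Fin.coeSucc_eq_succ, finSuccEquiv_X_succ]
  have := RingHom.congr_fun h P
  simpa using this.symm



/-- Let `R ⊆ B` be integral domains, `n ≥ 2`, and
`a, b₁, …, b_n ∈ B \ R` with `a ≠ 0`.  Assume:
(i) `B ⊆ R[a, a⁻¹, b₁, …, b_n]` inside `Frac B`;
(ii) `b₁, …, b_{n−1}` are algebraically independent over `R` and, identifying
`S := R[b₁,…,b_{n−1}]` with a polynomial ring in `n−1` variables,
`S ∩ aB = (φ₁(b₁), …, φ_{n−1}(b₁,…,b_{n−1}))·S` for polynomials `φ_i ∈ R[T₁,…,T_i]`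
such that `φ_i(b₁,…,b_i) = a^{l_i}·g_i(a, b₁, …, b_{i+1})` in `B` with `l_i > 0` and
`g_i` a polynomial in `i+2` variables over `R`; and
(iii) the image of `b_n` in `B/aB` is transcendental over the `R`-subalgebra generated
by the images of `b₁, …, b_{n−1}`.
Then `B = R[a, b₁, …, b_n]`.
(Indexing: `b : Fin n → B` is `0`-based, so `b i` is the mathematical `b_{i+1}`.) -/
theorem stmt_15 {R B : Type*} [CommRing R] [IsDomain R] [CommRing B] [IsDomain B]
    [Algebra R B] (hinj : Function.Injective (algebraMap R B))
    (n : ℕ) (hn : 2 ≤ n)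
    (a : B) (ha0 : a ≠ 0) (haR : a ∉ Set.range (algebraMap R B))
    (b : Fin n → B) (hbR : ∀ i, b i ∉ Set.range (algebraMap R B))
    -- (i) `B ⊆ R[a, a⁻¹, b₁, …, b_n]` inside the fraction field of `B`
    (hi : ∀ β : B, algebraMap B (FractionRing B) β ∈
      Algebra.adjoin R
        (insert ((algebraMap B (FractionRing B) a)⁻¹)
          (insert (algebraMap B (FractionRing B) a)
            (Set.range fun i : Fin n => algebraMap B (FractionRing B) (b i)))))
    -- (ii) `b₁, …, b_{n-1}` are algebraically independent over `R`
    (hind : AlgebraicIndependent R fun i : Fin (n - 1) => b (Fin.castLE (Nat.sub_le n 1) i))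
    (φ : (i : Fin (n - 1)) → MvPolynomial (Fin ((i : ℕ) + 1)) R)
    -- `S ∩ aB` is generated by the `φ_i(b₁,…,b_i)`
    (hSa : ∀ p : MvPolynomial (Fin (n - 1)) R,
      MvPolynomial.aeval (fun i : Fin (n - 1) => b (Fin.castLE (Nat.sub_le n 1) i)) p ∈
          Ideal.span ({a} : Set B) ↔
        p ∈ Ideal.span
          (Set.range fun i : Fin (n - 1) => MvPolynomial.rename (Fin.castLE i.isLt) (φ i)))
    -- `φ_i(b₁,…,b_i) = a^{l_i}·g_i(a, b₁, …, b_{i+1})` with `l_i > 0`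
    (l : Fin (n - 1) → ℕ) (hl : ∀ i, 0 < l i)
    (g : (i : Fin (n - 1)) → MvPolynomial (Fin ((i : ℕ) + 2 + 1)) R)
    (hφ : ∀ i : Fin (n - 1),
      MvPolynomial.aeval
          (fun j : Fin ((i : ℕ) + 1) => b (Fin.castLE (by have := i.isLt; omega) j)) (φ i) =
        a ^ l i *
          MvPolynomial.aeval
            (Fin.cons a fun j : Fin ((i : ℕ) + 2) =>
              b (Fin.castLE (by have := i.isLt; omega) j)) (g i))
    -- (iii) the image of `b_n` in `B/aB` is transcendental over the images of the others
    (htr : Transcendental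
      ↥(Algebra.adjoin R
        (Set.range fun i : Fin (n - 1) =>
          Ideal.Quotient.mk (Ideal.span ({a} : Set B)) (b (Fin.castLE (Nat.sub_le n 1) i))))
      (Ideal.Quotient.mk (Ideal.span ({a} : Set B)) (b ⟨n - 1, by omega⟩))) :
    Algebra.adjoin R (insert a (Set.range b)) = ⊤ := by
  classical
  obtain ⟨m, rfl⟩ : ∃ m, n = m + 1 := ⟨n - 1, by omega⟩
  set A := Algebra.adjoin R (insert a (Set.range b)) with hAdef
  have haA : a ∈ A := Algebra.subset_adjoin (Set.mem_insert _ _)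
  have hbA : ∀ i, b i ∈ A := fun i => Algebra.subset_adjoin (Set.mem_insert_of_mem _ ⟨i, rfl⟩)
  set c : Fin m → B := fun i => b i.castSucc with hcdef
  have hcA : ∀ i, c i ∈ A := fun i => hbA _
  -- reindex all hypotheses to `Fin m` (definitional, since `m + 1 - 1 ≡ m`)
  have hSa' : ∀ p : MvPolynomial (Fin m) R,
      MvPolynomial.aeval c p ∈ Ideal.span ({a} : Set B) ↔
        p ∈ Ideal.span
          (Set.range fun i : Fin m => MvPolynomial.rename (Fin.castLE i.isLt) (φ i)) := hSa
  have hφ' : ∀ i : Fin m,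
      MvPolynomial.aeval
          (fun j : Fin ((i : ℕ) + 1) =>
            b (Fin.castLE (by have := i.isLt; omega : (i : ℕ) + 1 ≤ m + 1) j)) (φ i) =
        a ^ l i *
          MvPolynomial.aeval
            (Fin.cons a fun j : Fin ((i : ℕ) + 2) =>
              b (Fin.castLE (by have := i.isLt; omega : (i : ℕ) + 2 ≤ m + 1) j)) (g i) := hφ
  have htr' : Transcendental
      ↥(Algebra.adjoin R
        (Set.range fun i : Fin m => Ideal.Quotient.mk (Ideal.span ({a} : Set B)) (c i)))
      (Ideal.Quotient.mk (Ideal.span ({a} : Set B)) (b (Fin.last m))) := htr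
  clear hSa hφ htr hind hbR haR hn
  -- the key cancellation step
  have key : ∀ β : B, a * β ∈ A → β ∈ A := by
    intro β hβ
    obtain ⟨P, hP⟩ : ∃ P : MvPolynomial (Fin (m + 1 + 1)) R,
        MvPolynomial.aeval (Fin.cons a b) P = a * β := by
      have h1 : a * β ∈ Algebra.adjoin R (Set.range (Fin.cons a b)) := by
        rw [Fin.range_cons]
        exact hβ
      rw [Algebra.adjoin_range_eq_range_aeval] at h1
      rwa [AlgHom.mem_range] at h1
    obtain ⟨q, hqA, hq⟩ := aux_diff A a haA b hbA P
    set β₀ : B := MvPolynomial.aeval (Fin.cons (0 : B) b) P with hβ₀def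
    have hβ₀I : β₀ ∈ Ideal.span ({a} : Set B) := by
      have h2 : β₀ = a * (β - q) := by linear_combination hP - hq
      rw [h2]
      exact Ideal.mem_span_singleton.2 ⟨β - q, rfl⟩
    set P₀ : MvPolynomial (Fin (m + 1)) R :=
      MvPolynomial.aeval (Fin.cons 0 MvPolynomial.X) P with hP₀def
    have hβ₀eq : MvPolynomial.aeval b P₀ = β₀ := by
      have hfun : (fun i : Fin (m + 1 + 1) => (MvPolynomial.aeval b)
          ((Fin.cons 0 MvPolynomial.X : Fin (m + 1 + 1) → MvPolynomial (Fin (m + 1)) R) i))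
          = Fin.cons (0 : B) b := by
        funext i
        refine Fin.cases ?_ (fun j => ?_) i <;> simp
      rw [hP₀def, hβ₀def, MvPolynomial.comp_aeval_apply, hfun]
    set Q : Polynomial (MvPolynomial (Fin m) R) :=
      MvPolynomial.finSuccEquiv R m (MvPolynomial.rename (finRotate (m + 1)) P₀) with hQdef
    have hdec : MvPolynomial.aeval b P₀ =
        Polynomial.eval₂ (MvPolynomial.aeval c).toRingHom (b (Fin.last m)) Q := aux_dec b P₀
    -- pass to B/aB and use transcendence
    set π : B →+* B ⧸ Ideal.span ({a} : Set B) := Ideal.Quotient.mk (Ideal.span ({a} : Set B))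
      with hπdef
    set Abar := Algebra.adjoin R (Set.range fun i : Fin m => π (c i)) with hAbardef
    set u : MvPolynomial (Fin m) R →ₐ[R] Abar :=
      MvPolynomial.aeval (fun i : Fin m =>
        (⟨π (c i), Algebra.subset_adjoin ⟨i, rfl⟩⟩ : Abar)) with hudef
    have hucomp : ∀ p : MvPolynomial (Fin m) R,
        (algebraMap Abar (B ⧸ Ideal.span ({a} : Set B))) (u p) = π (MvPolynomial.aeval c p) := by
      intro p
      induction p using MvPolynomial.induction_on with
      | C r =>
        rw [hudef]
        simp only [aeval_C]
        rw [← IsScalarTower.algebraMap_apply R (↥Abar) (B ⧸ Ideal.span ({a} : Set B)) r,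
          IsScalarTower.algebraMap_apply R B (B ⧸ Ideal.span ({a} : Set B)) r,
          Ideal.Quotient.algebraMap_eq]
      | add p1 p2 h1 h2 => simp only [map_add, h1, h2]
      | mul_X p1 i h1 =>
        have hx : (algebraMap (↥Abar) (B ⧸ Ideal.span ({a} : Set B))) (u (X i)) = π (c i) := by
          rw [hudef]
          simp only [aeval_X]
          rfl
        calc (algebraMap (↥Abar) (B ⧸ Ideal.span ({a} : Set B))) (u (p1 * X i))
            = (algebraMap (↥Abar) (B ⧸ Ideal.span ({a} : Set B))) (u p1) *
              (algebraMap (↥Abar) (B ⧸ Ideal.span ({a} : Set B))) (u (X i)) := by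
              rw [map_mul, map_mul]
          _ = π ((MvPolynomial.aeval c) p1) * π (c i) := by rw [h1, hx]
          _ = π ((MvPolynomial.aeval c) (p1 * X i)) := by rw [map_mul, map_mul, aeval_X]
    have hcoefI : ∀ k : ℕ, MvPolynomial.aeval c (Q.coeff k) ∈ Ideal.span ({a} : Set B) := by
      have h0 : π (MvPolynomial.aeval b P₀) = 0 := by
        rw [hβ₀eq, hπdef]
        exact Ideal.Quotient.eq_zero_iff_mem.2 hβ₀I
      rw [hdec, Polynomial.hom_eval₂] at h0
      have hcompeq : (algebraMap Abar (B ⧸ Ideal.span ({a} : Set B))).comp u.toRingHom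
          = π.comp (MvPolynomial.aeval c).toRingHom := RingHom.ext hucomp
      have h1 : Polynomial.aeval (π (b (Fin.last m))) (Q.map u.toRingHom) = 0 := by
        rw [Polynomial.aeval_def, Polynomial.eval₂_map, hcompeq]
        exact h0
      have hQ0 : Q.map u.toRingHom = 0 := by
        by_contra hne
        exact htr' ⟨Q.map u.toRingHom, hne, h1⟩
      intro k
      have h2 : u (Q.coeff k) = 0 := by
        have h3 := congrArg (fun p => Polynomial.coeff p k) hQ0
        simpa using h3
      have h4 : π (MvPolynomial.aeval c (Q.coeff k)) = 0 := by
        rw [← hucomp, h2, map_zero]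
      rw [hπdef] at h4
      exact Ideal.Quotient.eq_zero_iff_mem.1 h4
    -- each generator `φ i` evaluates to a * (element of A)
    have hterm : ∀ i : Fin m, ∃ G ∈ A,
        MvPolynomial.aeval (c ∘ Fin.castLE i.isLt) (φ i) = a * G := by
      intro i
      have hGA : MvPolynomial.aeval
          (Fin.cons a fun j : Fin ((i : ℕ) + 2) =>
            b (Fin.castLE (by have := i.isLt; omega : (i : ℕ) + 2 ≤ m + 1) j)) (g i) ∈ A := by
        refine aux_aeval_mem A (fun j => ?_) (g i)
        refine Fin.cases ?_ (fun j' => ?_) j <;> simp [haA, hbA]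
      refine ⟨a ^ (l i - 1) * _, mul_mem (pow_mem haA _) hGA, ?_⟩
      calc MvPolynomial.aeval (c ∘ Fin.castLE i.isLt) (φ i)
          = a ^ l i * MvPolynomial.aeval
            (Fin.cons a fun j : Fin ((i : ℕ) + 2) =>
              b (Fin.castLE (by have := i.isLt; omega : (i : ℕ) + 2 ≤ m + 1) j)) (g i) := hφ' i
        _ = a * (a ^ (l i - 1) * MvPolynomial.aeval
            (Fin.cons a fun j : Fin ((i : ℕ) + 2) =>
              b (Fin.castLE (by have := i.isLt; omega : (i : ℕ) + 2 ≤ m + 1) j)) (g i)) := by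
            conv_lhs => rw [show l i = (l i - 1) + 1 from (Nat.succ_pred_eq_of_pos (hl i)).symm]
            rw [pow_succ]
            ring
    choose G hGA hG using hterm
    have hcoefA : ∀ k : ℕ, ∃ y ∈ A, MvPolynomial.aeval c (Q.coeff k) = a * y := by
      intro k
      have hmem := (hSa' (Q.coeff k)).mp (hcoefI k)
      rw [Ideal.mem_span_range_iff_exists_fun] at hmem
      obtain ⟨cf, hcf⟩ := hmem
      refine ⟨∑ i : Fin m, MvPolynomial.aeval c (cf i) * G i,
        Subalgebra.sum_mem A (fun i _ => mul_mem (aux_aeval_mem A hcA _) (hGA i)), ?_⟩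
      rw [← hcf, map_sum, Finset.mul_sum]
      refine Finset.sum_congr rfl (fun i _ => ?_)
      rw [map_mul]
      simp only [MvPolynomial.aeval_rename]
      rw [hG i]
      ring
    choose y hyA hy using hcoefA
    have hsum : MvPolynomial.aeval b P₀ = a * ∑ k ∈ Q.support, y k * b (Fin.last m) ^ k := by
      rw [hdec, Polynomial.eval₂_eq_sum, Polynomial.sum_def, Finset.mul_sum]
      refine Finset.sum_congr rfl (fun k _ => ?_)
      rw [show ((MvPolynomial.aeval c).toRingHom : MvPolynomial (Fin m) R → B) (Q.coeff k)
          = MvPolynomial.aeval c (Q.coeff k) from rfl, hy k]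
      ring
    have hyAsum : (∑ k ∈ Q.support, y k * b (Fin.last m) ^ k) ∈ A :=
      Subalgebra.sum_mem A (fun k _ => mul_mem (hyA k) (pow_mem (hbA _) _))
    have hfinal : a * β = a * (q + (∑ k ∈ Q.support, y k * b (Fin.last m) ^ k)) := by
      rw [← hP]
      linear_combination hq + hβ₀eq.symm.trans hsum
    have hβeq : β = q + ∑ k ∈ Q.support, y k * b (Fin.last m) ^ k :=
      mul_left_cancel₀ ha0 hfinal
    rw [hβeq]
    exact add_mem hqA hyAsum
  -- power induction
  have pow_lemma : ∀ (N : ℕ) (β : B), a ^ N * β ∈ A → β ∈ A := by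
    intro N
    induction N with
    | zero => intro β h; simpa using h
    | succ N ih =>
      intro β h
      refine key β (ih _ ?_)
      have h2 : a ^ N * (a * β) = a ^ (N + 1) * β := by ring
      rw [h2]
      exact h
  -- clearing denominators using (i)
  have step1 : ∀ β : B, ∃ N : ℕ, a ^ N * β ∈ A := by
    intro β
    have hKinj : Function.Injective (algebraMap B (FractionRing B)) :=
      IsFractionRing.injective B (FractionRing B)
    have hfa : algebraMap B (FractionRing B) a ≠ 0 := fun h => ha0 (hKinj (by rw [h, map_zero]))
    have main : ∀ z ∈ Algebra.adjoin R
        (insert ((algebraMap B (FractionRing B)) a)⁻¹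
          (insert ((algebraMap B (FractionRing B)) a)
            (Set.range fun i : Fin (m + 1) => algebraMap B (FractionRing B) (b i)))),
        ∃ (N : ℕ) (x : B), x ∈ A ∧
          (algebraMap B (FractionRing B) a) ^ N * z = algebraMap B (FractionRing B) x := by
      intro z hz
      induction hz using Algebra.adjoin_induction with
      | mem x hx =>
        rcases hx with rfl | hx
        · exact ⟨1, 1, one_mem _, by rw [pow_one, mul_inv_cancel₀ hfa, map_one]⟩
        rcases hx with rfl | ⟨i, rfl⟩
        · exact ⟨0, a, haA, by rw [pow_zero, one_mul]⟩
        · exact ⟨0, b i, hbA i, by rw [pow_zero, one_mul]⟩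
      | algebraMap r =>
        exact ⟨0, algebraMap R B r, Subalgebra.algebraMap_mem A r,
          by rw [pow_zero, one_mul, ← IsScalarTower.algebraMap_apply]⟩
      | add x1 x2 hx1 hx2 ih1 ih2 =>
        obtain ⟨N1, y1, h1A, h1⟩ := ih1
        obtain ⟨N2, y2, h2A, h2⟩ := ih2
        refine ⟨N1 + N2, a ^ N2 * y1 + a ^ N1 * y2,
          add_mem (mul_mem (pow_mem haA _) h1A) (mul_mem (pow_mem haA _) h2A), ?_⟩
        rw [map_add, map_mul, map_mul, map_pow, map_pow, ← h1, ← h2]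
        ring
      | mul x1 x2 hx1 hx2 ih1 ih2 =>
        obtain ⟨N1, y1, h1A, h1⟩ := ih1
        obtain ⟨N2, y2, h2A, h2⟩ := ih2
        refine ⟨N1 + N2, y1 * y2, mul_mem h1A h2A, ?_⟩
        rw [map_mul, ← h1, ← h2]
        ring
    obtain ⟨N, x, hxA, hx⟩ := main _ (hi β)
    refine ⟨N, ?_⟩
    have h5 : algebraMap B (FractionRing B) (a ^ N * β) = algebraMap B (FractionRing B) x := by
      rw [map_mul, map_pow]
      exact hx
    rw [hKinj h5]
    exact hxA
  rw [eq_top_iff]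
  rintro β -
  obtain ⟨N, hN⟩ := step1 β
  exact pow_lemma N β hN
end
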